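/- Let w ∈ S_n and let d be the number of distinct letters i that are unconfined in every reduced word of w. Then 2^d divides the cardinality of the principal order ideal B(w). -/

import Mathlib

/-- The adjacent transposition `σ_i`, swapping `i` and `i+1` (acting on `ℕ`). -/
def sigmaT (i : ℕ) : Equiv.Perm ℕ := Equiv.swap i (i + 1)

/-- The permutation given by a word (product of simple reflections, composed as functions). -/
def wordProd (s : List ℕ) : Equiv.Perm ℕ := (s.map sigmaT).prod

/-- `s` is a word for `w` in `S_n`: all letters lie in `{1,…,n-1}` and the product is `w`. -/
def IsWord (n : ℕ) (w : Equiv.Perm ℕ) (s : List ℕ) : Prop :=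
  (∀ j ∈ s, 1 ≤ j ∧ j ≤ n - 1) ∧ wordProd s = w

/-- `s` is a reduced word for `w`: a word of minimal length. -/
def IsReducedWord (n : ℕ) (w : Equiv.Perm ℕ) (s : List ℕ) : Prop :=
  IsWord n w s ∧ ∀ t : List ℕ, IsWord n w t → s.length ≤ t.length

/-- The Coxeter length `ℓ(w)`. -/
noncomputable def ell (n : ℕ) (w : Equiv.Perm ℕ) : ℕ :=
  sInf {k | ∃ s : List ℕ, IsWord n w s ∧ s.length = k}

/-- The support of `w`: letters appearing in reduced words of `w`. -/
def supp (n : ℕ) (w : Equiv.Perm ℕ) : Set ℕ :=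
  {i | ∃ s : List ℕ, IsReducedWord n w s ∧ i ∈ s}

/-- Bruhat order: some reduced word of `v` is a subsequence of some reduced word of `w`. -/
def BruhatLE (n : ℕ) (v w : Equiv.Perm ℕ) : Prop :=
  ∃ s t : List ℕ, IsReducedWord n v s ∧ IsReducedWord n w t ∧ s.Sublist t

/-- The principal order ideal `B(w)`, as a type. -/
def IdealB (n : ℕ) (w : Equiv.Perm ℕ) : Type := {v : Equiv.Perm ℕ // BruhatLE n v w}

/-- The Bruhat order restricted to `B(w)`. -/
def IdealLE (n : ℕ) (w : Equiv.Perm ℕ) (a b : IdealB n w) : Prop := BruhatLE n a.1 b.1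

/-- Two relations are isomorphic (order isomorphism of the corresponding ordered sets). -/
def RelIsomorphic {α β : Type*} (ra : α → α → Prop) (rb : β → β → Prop) : Prop :=
  ∃ e : α ≃ β, ∀ a b : α, ra a b ↔ rb (e a) (e b)

/-- `w` is a prism: `B(w) ≅ C₂ × X` for some partially ordered set `X`
(the two-element chain `C₂` realized as `Bool`), with the componentwise order. -/
def IsPrism (n : ℕ) (w : Equiv.Perm ℕ) : Prop :=
  ∃ (X : Type) (rX : X → X → Prop), IsPartialOrder X rX ∧
    RelIsomorphic (IdealLE n w)
      (fun p q : Bool × X => (p.1 ≤ q.1) ∧ rX p.2 q.2)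

/-- `w` belongs to `S_n`: it fixes every point outside `{1,…,n}`. -/
def MemSymm (n : ℕ) (w : Equiv.Perm ℕ) : Prop :=
  ∀ x : ℕ, x ∉ Set.Icc 1 n → w x = x

/-- `i` is unconfined in the word `s`: it appears exactly once, not between two copies
of `i+1` and not between two copies of `i-1`. -/
def Unconfined (i : ℕ) (s : List ℕ) : Prop :=
  s.count i = 1 ∧ ∀ a b : List ℕ, s = a ++ i :: b →
    ¬((i + 1) ∈ a ∧ (i + 1) ∈ b) ∧ ¬((i - 1) ∈ a ∧ (i - 1) ∈ b)

/-- `B(w) ≅ C₂ × B(v)` with the componentwise order. -/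
def IsoC2TimesIdeal (n : ℕ) (w v : Equiv.Perm ℕ) : Prop :=
  RelIsomorphic (IdealLE n w)
    (fun p q : Bool × IdealB n v => (p.1 ≤ q.1) ∧ IdealLE n v p.2 q.2)


/-! ## Auxiliary development -/

open Equiv List Finset

/-! ### Section A : basics -/

lemma sigmaT_apply (j x : ℕ) : sigmaT j x = if x = j then j + 1 else if x = j + 1 then j else x := by
  simp [sigmaT, Equiv.swap_apply_def]

lemma sigmaT_mul_self (j : ℕ) : sigmaT j * sigmaT j = 1 := Equiv.swap_mul_self _ _

lemma wordProd_nil : wordProd [] = 1 := rfl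

lemma wordProd_cons (j : ℕ) (s : List ℕ) : wordProd (j :: s) = sigmaT j * wordProd s := by
  simp [wordProd]

lemma wordProd_append (s t : List ℕ) : wordProd (s ++ t) = wordProd s * wordProd t := by
  simp [wordProd]

lemma wordProd_singleton (j : ℕ) : wordProd [j] = sigmaT j := by
  simp [wordProd]

lemma memSymm_one (n : ℕ) : MemSymm n 1 := fun x _ => rfl

lemma memSymm_sigmaT {n j : ℕ} (h1 : 1 ≤ j) (h2 : j ≤ n - 1) : MemSymm n (sigmaT j) := by
  intro x hx
  simp only [Set.mem_Icc, not_and_or, not_le] at hx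
  rw [sigmaT_apply]
  split_ifs with ha hb <;> omega

lemma memSymm_mul {n : ℕ} {v w : Equiv.Perm ℕ} (hv : MemSymm n v) (hw : MemSymm n w) :
    MemSymm n (v * w) := by
  intro x hx
  have := hw x hx
  simp only [Equiv.Perm.mul_apply, this, hv x hx]

lemma memSymm_wordProd {n : ℕ} {s : List ℕ} (h : ∀ j ∈ s, 1 ≤ j ∧ j ≤ n - 1) :
    MemSymm n (wordProd s) := by
  induction s with
  | nil => exact memSymm_one n
  | cons j t ih =>
      rw [wordProd_cons]
      exact memSymm_mul (memSymm_sigmaT (h j (by simp)).1 (h j (by simp)).2)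
        (ih fun i hi => h i (by simp [hi]))

lemma isWord_memSymm {n : ℕ} {w : Equiv.Perm ℕ} {s : List ℕ} (h : IsWord n w s) :
    MemSymm n w := h.2 ▸ memSymm_wordProd h.1

lemma memSymm_apply_mem {n : ℕ} {w : Equiv.Perm ℕ} (hw : MemSymm n w) {x : ℕ}
    (hx : x ∈ Set.Icc 1 n) : w x ∈ Set.Icc 1 n := by
  by_contra h
  have h1 := hw _ h
  have := w.injective h1
  rw [← this] at hx
  exact h hx

lemma memSymm_inv {n : ℕ} {w : Equiv.Perm ℕ} (hw : MemSymm n w) : MemSymm n w⁻¹ := by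
  intro x hx
  have h := hw x hx
  nth_rewrite 1 [← h]
  exact w.symm_apply_apply x

/-! ### Section B : inversions -/

def invF (n : ℕ) (w : Equiv.Perm ℕ) : Finset (ℕ × ℕ) :=
  (Finset.Icc 1 n ×ˢ Finset.Icc 1 n).filter (fun p => p.1 < p.2 ∧ w p.2 < w p.1)

def invN (n : ℕ) (w : Equiv.Perm ℕ) : ℕ := (invF n w).card

lemma mem_invF {n : ℕ} {w : Equiv.Perm ℕ} {p : ℕ × ℕ} :
    p ∈ invF n w ↔ (p.1 ∈ Finset.Icc 1 n ∧ p.2 ∈ Finset.Icc 1 n) ∧ p.1 < p.2 ∧ w p.2 < w p.1 := by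
  simp [invF, Finset.mem_filter, Finset.mem_product, and_assoc]

lemma sigmaT_apply_self (j : ℕ) : sigmaT j j = j + 1 := by simp [sigmaT_apply]

lemma sigmaT_apply_succ (j : ℕ) : sigmaT j (j + 1) = j := by simp [sigmaT_apply]

lemma sigmaT_invol (j x : ℕ) : sigmaT j (sigmaT j x) = x := by
  rw [sigmaT_apply, sigmaT_apply]; split_ifs <;> omega

lemma sigmaT_lt_of_lt {j x y : ℕ} (hxy : x < y) (hne : ¬(x = j ∧ y = j + 1)) :
    sigmaT j x < sigmaT j y := by
  rw [sigmaT_apply, sigmaT_apply]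
  split_ifs <;> omega

lemma sigmaT_mem_Icc {n j x : ℕ} (h1 : 1 ≤ j) (h2 : j + 1 ≤ n) (hx : x ∈ Finset.Icc 1 n) :
    sigmaT j x ∈ Finset.Icc 1 n := by
  simp only [Finset.mem_Icc] at *
  rw [sigmaT_apply]; split_ifs <;> omega

lemma invF_step {n j : ℕ} (w : Equiv.Perm ℕ) (h1 : 1 ≤ j) (h2 : j + 1 ≤ n) {x y : ℕ}
    (hmem : (x, y) ∈ (invF n (w * sigmaT j)).erase (j, j + 1)) :
    (sigmaT j x, sigmaT j y) ∈ (invF n w).erase (j, j + 1) := by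
  rw [Finset.mem_erase, mem_invF] at hmem
  obtain ⟨hne, ⟨hx, hy⟩, hxy, hinv⟩ := hmem
  have hxy' : sigmaT j x < sigmaT j y := by
    apply sigmaT_lt_of_lt hxy
    intro hc
    exact hne (by simp only [Prod.mk.injEq]; exact ⟨hc.1, hc.2⟩)
  rw [Finset.mem_erase, mem_invF]
  refine ⟨?_, ⟨sigmaT_mem_Icc h1 h2 hx, sigmaT_mem_Icc h1 h2 hy⟩, hxy', ?_⟩
  · intro hcontra
    have hx' : sigmaT j x = j := congrArg Prod.fst hcontra
    have hy' : sigmaT j y = j + 1 := congrArg Prod.snd hcontra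
    have e1 : x = j + 1 := by rw [← sigmaT_invol j x, hx', sigmaT_apply_self]
    have e2 : y = j := by rw [← sigmaT_invol j y, hy', sigmaT_apply_succ]
    omega
  · simpa [Equiv.Perm.mul_apply] using hinv

lemma invF_step' {n j : ℕ} (w : Equiv.Perm ℕ) (h1 : 1 ≤ j) (h2 : j + 1 ≤ n) {x y : ℕ}
    (hmem : (x, y) ∈ (invF n w).erase (j, j + 1)) :
    (sigmaT j x, sigmaT j y) ∈ (invF n (w * sigmaT j)).erase (j, j + 1) := by
  rw [Finset.mem_erase, mem_invF] at hmem
  obtain ⟨hne, ⟨hx, hy⟩, hxy, hinv⟩ := hmem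
  have hxy' : sigmaT j x < sigmaT j y := by
    apply sigmaT_lt_of_lt hxy
    intro hc
    exact hne (by simp only [Prod.mk.injEq]; exact ⟨hc.1, hc.2⟩)
  rw [Finset.mem_erase, mem_invF]
  refine ⟨?_, ⟨sigmaT_mem_Icc h1 h2 hx, sigmaT_mem_Icc h1 h2 hy⟩, hxy', ?_⟩
  · intro hcontra
    have hx' : sigmaT j x = j := congrArg Prod.fst hcontra
    have hy' : sigmaT j y = j + 1 := congrArg Prod.snd hcontra
    have e1 : x = j + 1 := by rw [← sigmaT_invol j x, hx', sigmaT_apply_self]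
    have e2 : y = j := by rw [← sigmaT_invol j y, hy', sigmaT_apply_succ]
    omega
  · simpa [Equiv.Perm.mul_apply, sigmaT_invol] using hinv

lemma invF_erase_card {n j : ℕ} (w : Equiv.Perm ℕ) (h1 : 1 ≤ j) (h2 : j + 1 ≤ n) :
    ((invF n (w * sigmaT j)).erase (j, j + 1)).card
      = ((invF n w).erase (j, j + 1)).card := by
  apply Finset.card_bij' (fun p _ => (sigmaT j p.1, sigmaT j p.2))
    (fun p _ => (sigmaT j p.1, sigmaT j p.2))
  · rintro ⟨x, y⟩ hp
    exact invF_step w h1 h2 hp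
  · rintro ⟨x, y⟩ hp
    exact invF_step' w h1 h2 hp
  · rintro ⟨x, y⟩ _
    simp [sigmaT_invol]
  · rintro ⟨x, y⟩ _
    simp [sigmaT_invol]

lemma card_eq_erase_add {α : Type*} [DecidableEq α] (s : Finset α) (a : α) :
    s.card = (s.erase a).card + (if a ∈ s then 1 else 0) := by
  split_ifs with h
  · rw [Finset.card_erase_of_mem h]
    have : 1 ≤ s.card := Finset.card_pos.mpr ⟨a, h⟩
    omega
  · rw [Finset.erase_eq_of_notMem h, add_zero]

lemma invN_mul_sigmaT_of_lt {n j : ℕ} {w : Equiv.Perm ℕ} (h1 : 1 ≤ j) (h2 : j + 1 ≤ n)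
    (h : w j < w (j + 1)) : invN n (w * sigmaT j) = invN n w + 1 := by
  have key := invF_erase_card (n := n) w h1 h2
  have m1 : (j, j + 1) ∈ invF n (w * sigmaT j) := by
    rw [mem_invF]
    have e1 : (w * sigmaT j) j = w (j + 1) := by
      simp [Equiv.Perm.mul_apply, sigmaT_apply_self]
    have e2 : (w * sigmaT j) (j + 1) = w j := by
      simp [Equiv.Perm.mul_apply, sigmaT_apply_succ]
    exact ⟨⟨by simp [Finset.mem_Icc]; omega, by simp [Finset.mem_Icc]; omega⟩, by omega,
      by rw [e1, e2]; exact h⟩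
  have m2 : (j, j + 1) ∉ invF n w := by
    rw [mem_invF]; push_neg; intro _ _
    show w j ≤ w (j + 1)
    exact le_of_lt h
  have c1 := card_eq_erase_add (invF n (w * sigmaT j)) (j, j + 1)
  have c2 := card_eq_erase_add (invF n w) (j, j + 1)
  rw [if_pos m1] at c1
  rw [if_neg m2] at c2
  unfold invN
  omega

lemma invN_mul_sigmaT_of_gt {n j : ℕ} {w : Equiv.Perm ℕ} (h1 : 1 ≤ j) (h2 : j + 1 ≤ n)
    (h : w (j + 1) < w j) : invN n (w * sigmaT j) + 1 = invN n w := by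
  have key := invF_erase_card (n := n) w h1 h2
  have m1 : (j, j + 1) ∉ invF n (w * sigmaT j) := by
    rw [mem_invF]; push_neg; intro _ _
    have e1 : (w * sigmaT j) j = w (j + 1) := by
      simp [Equiv.Perm.mul_apply, sigmaT_apply_self]
    have e2 : (w * sigmaT j) (j + 1) = w j := by
      simp [Equiv.Perm.mul_apply, sigmaT_apply_succ]
    show (w * sigmaT j) j ≤ (w * sigmaT j) (j + 1)
    rw [e1, e2]; exact le_of_lt h
  have m2 : (j, j + 1) ∈ invF n w := by
    rw [mem_invF]
    exact ⟨⟨by simp [Finset.mem_Icc]; omega, by simp [Finset.mem_Icc]; omega⟩, by omega, h⟩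
  have c1 := card_eq_erase_add (invF n (w * sigmaT j)) (j, j + 1)
  have c2 := card_eq_erase_add (invF n w) (j, j + 1)
  rw [if_neg m1] at c1
  rw [if_pos m2] at c2
  unfold invN
  omega

/-! ### Section C : length theory -/

lemma sigmaT_inv (j : ℕ) : (sigmaT j)⁻¹ = sigmaT j := Equiv.swap_inv _ _

lemma invN_one (n : ℕ) : invN n 1 = 0 := by
  unfold invN
  rw [Finset.card_eq_zero, Finset.eq_empty_iff_forall_notMem]
  intro p hp
  rw [mem_invF] at hp
  obtain ⟨_, h1, h2⟩ := hp
  simp only [Equiv.Perm.one_apply] at h2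
  omega

lemma eq_one_of_invN_zero {n : ℕ} {w : Equiv.Perm ℕ} (hw : MemSymm n w) (h : invN n w = 0) :
    w = 1 := by
  have hemp : invF n w = ∅ := Finset.card_eq_zero.mp h
  have hasc : ∀ x y, 1 ≤ x → x < y → y ≤ n → w x < w y := by
    intro x y h1 h2 h3
    have hne : w x ≠ w y := fun he => by have := w.injective he; omega
    rcases lt_or_ge (w x) (w y) with hlt | hle
    · exact hlt
    have : (x, y) ∈ invF n w := by
      rw [mem_invF]
      refine ⟨⟨?_, ?_⟩, h2, ?_⟩ <;> simp [Finset.mem_Icc] <;> omega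
    rw [hemp] at this
    exact absurd this (Finset.notMem_empty _)
  have hmem : ∀ x, 1 ≤ x → x ≤ n → 1 ≤ w x ∧ w x ≤ n := by
    intro x h1 h2
    have := memSymm_apply_mem hw (Set.mem_Icc.mpr ⟨h1, h2⟩)
    exact Set.mem_Icc.mp this
  have low : ∀ x, 1 ≤ x → x ≤ n → x ≤ w x := by
    intro x
    induction x with
    | zero => intro h; omega
    | succ k ih =>
        intro _ h2
        rcases Nat.eq_zero_or_pos k with hk | hk
        · subst hk; exact (hmem 1 le_rfl h2).1
        · have hwk := ih hk (by omega)
          have := hasc k (k + 1) hk (by omega) h2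
          omega
  have high : ∀ m x, 1 ≤ x → x ≤ n → n - x = m → w x ≤ x := by
    intro m
    induction m with
    | zero =>
        intro x h1 h2 h3
        have : x = n := by omega
        subst this
        exact (hmem x h1 h2).2
    | succ k ih =>
        intro x h1 h2 h3
        have hx : x < n := by omega
        have h4 := ih (x + 1) (by omega) (by omega) (by omega)
        have := hasc x (x + 1) h1 (by omega) (by omega)
        omega
  apply Equiv.ext
  intro x
  simp only [Equiv.Perm.one_apply]
  by_cases hx : x ∈ Set.Icc 1 n
  · obtain ⟨h1, h2⟩ := Set.mem_Icc.mp hx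
    have := low x h1 h2
    have := high (n - x) x h1 h2 rfl
    omega
  · exact hw x hx

lemma invN_inv {n : ℕ} {w : Equiv.Perm ℕ} (hw : MemSymm n w) : invN n w⁻¹ = invN n w := by
  apply Finset.card_bij' (fun p _ => ((w⁻¹ : Equiv.Perm ℕ) p.2, (w⁻¹ : Equiv.Perm ℕ) p.1))
    (fun p _ => (w p.2, w p.1))
  · rintro ⟨x, y⟩ hp
    rw [mem_invF] at hp ⊢
    obtain ⟨⟨hx, hy⟩, hxy, hinv⟩ := hp
    have hwi := memSymm_inv hw
    refine ⟨⟨?_, ?_⟩, hinv, ?_⟩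
    · have := memSymm_apply_mem hwi (Set.mem_Icc.mpr (Finset.mem_Icc.mp hy))
      exact Finset.mem_Icc.mpr (Set.mem_Icc.mp this)
    · have := memSymm_apply_mem hwi (Set.mem_Icc.mpr (Finset.mem_Icc.mp hx))
      exact Finset.mem_Icc.mpr (Set.mem_Icc.mp this)
    · show w ((w⁻¹ : Equiv.Perm ℕ) x) < w ((w⁻¹ : Equiv.Perm ℕ) y)
      rw [Equiv.Perm.inv_def, Equiv.apply_symm_apply, Equiv.apply_symm_apply]
      exact hxy
  · rintro ⟨x, y⟩ hp
    rw [mem_invF] at hp ⊢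
    obtain ⟨⟨hx, hy⟩, hxy, hinv⟩ := hp
    refine ⟨⟨?_, ?_⟩, hinv, ?_⟩
    · have := memSymm_apply_mem hw (Set.mem_Icc.mpr (Finset.mem_Icc.mp hy))
      exact Finset.mem_Icc.mpr (Set.mem_Icc.mp this)
    · have := memSymm_apply_mem hw (Set.mem_Icc.mpr (Finset.mem_Icc.mp hx))
      exact Finset.mem_Icc.mpr (Set.mem_Icc.mp this)
    · show (w⁻¹ : Equiv.Perm ℕ) (w x) < (w⁻¹ : Equiv.Perm ℕ) (w y)
      rw [Equiv.Perm.inv_def, Equiv.symm_apply_apply, Equiv.symm_apply_apply]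
      exact hxy
  · rintro ⟨x, y⟩ _
    simp
  · rintro ⟨x, y⟩ _
    simp

lemma exists_descent {n : ℕ} {w : Equiv.Perm ℕ} (hw : MemSymm n w) (h : invN n w ≠ 0) :
    ∃ j, 1 ≤ j ∧ j + 1 ≤ n ∧ w (j + 1) < w j := by
  by_contra hc
  push_neg at hc
  have hmono : ∀ k x, 1 ≤ x → x + k ≤ n → w x ≤ w (x + k) := by
    intro k
    induction k with
    | zero => intro x _ _; simp
    | succ m ih =>
        intro x h1 h2
        have h3 := ih x h1 (by omega)
        have h4 := hc (x + m) (by omega) (by omega)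
        calc w x ≤ w (x + m) := h3
          _ ≤ w (x + m + 1) := h4
          _ = w (x + (m + 1)) := by ring_nf
  obtain ⟨⟨x, y⟩, hp⟩ := Finset.card_ne_zero.mp (by simpa [invN] using h)
  rw [mem_invF] at hp
  obtain ⟨⟨hx, hy⟩, hxy, hinv⟩ := hp
  rw [Finset.mem_Icc] at hx hy
  have hinv' : w y < w x := hinv
  have := hmono (y - x) x hx.1 (by omega)
  have hxy' : x + (y - x) = y := by omega
  rw [hxy'] at this
  omega

lemma exists_word_length_invN {n : ℕ} {w : Equiv.Perm ℕ} (hw : MemSymm n w) :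
    ∃ s : List ℕ, IsWord n w s ∧ s.length = invN n w := by
  suffices H : ∀ k (w : Equiv.Perm ℕ), MemSymm n w → invN n w = k →
      ∃ s : List ℕ, IsWord n w s ∧ s.length = k by
    obtain ⟨s, hs⟩ := H (invN n w) w hw rfl
    exact ⟨s, hs.1, hs.2⟩
  intro k
  induction k using Nat.strong_induction_on with
  | _ k ih =>
    intro w hw hk
    rcases Nat.eq_zero_or_pos k with h0 | hpos
    · subst h0
      have := eq_one_of_invN_zero hw hk
      subst this
      exact ⟨[], ⟨by simp, rfl⟩, rfl⟩
    · obtain ⟨j, hj1, hj2, hdesc⟩ := exists_descent hw (by omega)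
      have hstep := invN_mul_sigmaT_of_gt hj1 hj2 hdesc
      rw [hk] at hstep
      have hw' : MemSymm n (w * sigmaT j) :=
        memSymm_mul hw (memSymm_sigmaT hj1 (by omega))
      obtain ⟨s', hs', hl'⟩ := ih (k - 1) (by omega) (w * sigmaT j) hw' (by omega)
      refine ⟨s' ++ [j], ⟨?_, ?_⟩, ?_⟩
      · intro i hi
        rcases List.mem_append.mp hi with h | h
        · exact hs'.1 i h
        · simp only [List.mem_singleton] at h
          subst h
          exact ⟨hj1, by omega⟩
      · rw [wordProd_append, wordProd_singleton, hs'.2, mul_assoc, sigmaT_mul_self, mul_one]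
      · simp [hl']
        omega

lemma invN_le_length {n : ℕ} : ∀ s : List ℕ, (∀ j ∈ s, 1 ≤ j ∧ j ≤ n - 1) →
    invN n (wordProd s) ≤ s.length := by
  intro s
  induction s using List.reverseRecOn with
  | nil => intro _; simp [wordProd_nil, invN_one]
  | append_singleton s j ih =>
      intro hb
      have hbs : ∀ i ∈ s, 1 ≤ i ∧ i ≤ n - 1 := fun i hi => hb i (by simp [hi])
      have hbj := hb j (by simp)
      have hj2 : j + 1 ≤ n := by omega
      have ihs := ih hbs
      rw [wordProd_append, wordProd_singleton]
      set w₀ := wordProd s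
      rcases lt_trichotomy (w₀ j) (w₀ (j + 1)) with h | h | h
      · rw [invN_mul_sigmaT_of_lt hbj.1 hj2 h]
        simp only [List.length_append, List.length_singleton]
        omega
      · exact absurd (w₀.injective h) (by omega)
      · have := invN_mul_sigmaT_of_gt hbj.1 hj2 h
        simp only [List.length_append, List.length_singleton]
        omega

lemma ell_eq_invN {n : ℕ} {w : Equiv.Perm ℕ} (hw : MemSymm n w) : ell n w = invN n w := by
  have hne : {k | ∃ s : List ℕ, IsWord n w s ∧ s.length = k}.Nonempty := by
    obtain ⟨s, hs, hl⟩ := exists_word_length_invN hw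
    exact ⟨invN n w, s, hs, hl⟩
  apply Nat.le_antisymm
  · obtain ⟨s, hs, hl⟩ := exists_word_length_invN hw
    exact Nat.sInf_le ⟨s, hs, hl⟩
  · have hmem := Nat.sInf_mem hne
    obtain ⟨s, hs, hl⟩ := hmem
    show invN n w ≤ sInf {k | ∃ s : List ℕ, IsWord n w s ∧ s.length = k}
    rw [← hl, ← hs.2]
    exact invN_le_length s hs.1

lemma isReducedWord_iff {n : ℕ} {w : Equiv.Perm ℕ} {s : List ℕ} :
    IsReducedWord n w s ↔ IsWord n w s ∧ s.length = invN n w := by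
  constructor
  · rintro ⟨hword, hmin⟩
    have hw : MemSymm n w := isWord_memSymm hword
    obtain ⟨s₀, hs₀, hl₀⟩ := exists_word_length_invN hw
    have h1 : s.length ≤ invN n w := hl₀ ▸ hmin s₀ hs₀
    have h2 : invN n w ≤ s.length := by
      rw [← hword.2]
      exact invN_le_length s hword.1
    exact ⟨hword, by omega⟩
  · rintro ⟨hword, hlen⟩
    refine ⟨hword, fun t ht => ?_⟩
    rw [hlen, ← ht.2]
    exact invN_le_length t ht.1

lemma exists_reducedWord {n : ℕ} {w : Equiv.Perm ℕ} (hw : MemSymm n w) :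
    ∃ s, IsReducedWord n w s := by
  obtain ⟨s, hs, hl⟩ := exists_word_length_invN hw
  exact ⟨s, isReducedWord_iff.mpr ⟨hs, hl⟩⟩

lemma invN_sigmaT_mul_of_gt {n k : ℕ} {w : Equiv.Perm ℕ} (hw : MemSymm n w)
    (h1 : 1 ≤ k) (h2 : k + 1 ≤ n) (h : (w⁻¹ : Equiv.Perm ℕ) (k + 1) < (w⁻¹ : Equiv.Perm ℕ) k) :
    invN n (sigmaT k * w) + 1 = invN n w := by
  have hiv := invN_mul_sigmaT_of_gt (w := w⁻¹) h1 h2 h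
  have hmw : MemSymm n (sigmaT k * w) := memSymm_mul (memSymm_sigmaT h1 (by omega)) hw
  have e1 : invN n (sigmaT k * w) = invN n ((sigmaT k * w)⁻¹) := (invN_inv hmw).symm
  have e2 : (sigmaT k * w)⁻¹ = w⁻¹ * sigmaT k := by
    rw [mul_inv_rev, sigmaT_inv]
  rw [e1, e2, hiv, invN_inv hw]

lemma invN_sigmaT_mul_of_lt {n k : ℕ} {w : Equiv.Perm ℕ} (hw : MemSymm n w)
    (h1 : 1 ≤ k) (h2 : k + 1 ≤ n) (h : (w⁻¹ : Equiv.Perm ℕ) k < (w⁻¹ : Equiv.Perm ℕ) (k + 1)) :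
    invN n (sigmaT k * w) = invN n w + 1 := by
  have hiv := invN_mul_sigmaT_of_lt (w := w⁻¹) h1 h2 h
  have hmw : MemSymm n (sigmaT k * w) := memSymm_mul (memSymm_sigmaT h1 (by omega)) hw
  have e1 : invN n (sigmaT k * w) = invN n ((sigmaT k * w)⁻¹) := (invN_inv hmw).symm
  have e2 : (sigmaT k * w)⁻¹ = w⁻¹ * sigmaT k := by
    rw [mul_inv_rev, sigmaT_inv]
  rw [e1, e2, hiv, invN_inv hw]

/-! ### Section D : exchange and deletion -/

lemma sigmaT_cross {j x y : ℕ} (hxy : x < y) (h : sigmaT j y < sigmaT j x) :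
    x = j ∧ y = j + 1 := by
  rw [sigmaT_apply, sigmaT_apply] at h
  split_ifs at h <;> omega

lemma exchange_aux : ∀ (s : List ℕ) (a b : ℕ), a < b → wordProd s b < wordProd s a →
    ∃ m < s.length, wordProd (s.eraseIdx m) = wordProd s * Equiv.swap a b := by
  intro s
  induction s with
  | nil =>
      intro a b hab h
      simp only [wordProd_nil, Equiv.Perm.one_apply] at h
      omega
  | cons j rest ih =>
      intro a b hab hlt
      have hlt' : sigmaT j (wordProd rest b) < sigmaT j (wordProd rest a) := by
        simpa [wordProd_cons, Equiv.Perm.mul_apply] using hlt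
      rcases lt_trichotomy (wordProd rest a) (wordProd rest b) with hc | hc | hc
      · obtain ⟨h1, h2⟩ := sigmaT_cross hc hlt'
        refine ⟨0, by simp, ?_⟩
        show wordProd rest = wordProd (j :: rest) * Equiv.swap a b
        rw [wordProd_cons]
        apply Equiv.ext
        intro x
        show wordProd rest x = sigmaT j (wordProd rest (Equiv.swap a b x))
        rcases eq_or_ne x a with rfl | hxa
        · rw [Equiv.swap_apply_left, h2, sigmaT_apply_succ, h1]
        rcases eq_or_ne x b with rfl | hxb
        · rw [Equiv.swap_apply_right, h1, sigmaT_apply_self, h2]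
        · rw [Equiv.swap_apply_of_ne_of_ne hxa hxb, sigmaT_apply]
          have e1 : wordProd rest x ≠ j := fun hh =>
            hxa ((wordProd rest).injective (hh.trans h1.symm))
          have e2 : wordProd rest x ≠ j + 1 := fun hh =>
            hxb ((wordProd rest).injective (hh.trans h2.symm))
          rw [if_neg e1, if_neg e2]
      · exact absurd ((wordProd rest).injective hc) (by omega)
      · obtain ⟨m, hm, heq⟩ := ih a b hab hc
        refine ⟨m + 1, by simpa using hm, ?_⟩
        show wordProd (j :: rest.eraseIdx m) = wordProd (j :: rest) * Equiv.swap a b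
        rw [wordProd_cons, wordProd_cons, heq, mul_assoc]

lemma swap_eq_sigmaT (j : ℕ) : Equiv.swap j (j + 1) = sigmaT j := rfl

lemma exists_reduced_sublist {n : ℕ} : ∀ s : List ℕ, (∀ j ∈ s, 1 ≤ j ∧ j ≤ n - 1) →
    ∃ u, u.Sublist s ∧ IsReducedWord n (wordProd s) u := by
  intro s
  induction s using List.reverseRecOn with
  | nil =>
      exact fun _ => ⟨[], by simp,
        isReducedWord_iff.mpr ⟨⟨by simp, rfl⟩, by simp [wordProd_nil, invN_one]⟩⟩
  | append_singleton s j ih =>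
      intro hb
      have hbs : ∀ i ∈ s, 1 ≤ i ∧ i ≤ n - 1 := fun i hi => hb i (by simp [hi])
      have hbj := hb j (by simp)
      have hj2 : j + 1 ≤ n := by omega
      obtain ⟨u, hus, hur⟩ := ih hbs
      have hured := isReducedWord_iff.mp hur
      have hu_prod : wordProd u = wordProd s := hured.1.2
      have hu_len : u.length = invN n (wordProd s) := hured.2
      have hu_bound : ∀ i ∈ u, 1 ≤ i ∧ i ≤ n - 1 := hured.1.1
      have hprod : wordProd (s ++ [j]) = wordProd s * sigmaT j := by
        rw [wordProd_append, wordProd_singleton]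
      rcases lt_trichotomy (wordProd s j) (wordProd s (j + 1)) with h | h | h
      · refine ⟨u ++ [j], hus.append_right [j], isReducedWord_iff.mpr ⟨⟨?_, ?_⟩, ?_⟩⟩
        · intro i hi
          rcases List.mem_append.mp hi with h' | h'
          · exact hu_bound i h'
          · simp only [List.mem_singleton] at h'; subst h'; exact hbj
        · rw [wordProd_append, wordProd_singleton, hu_prod, hprod]
        · rw [hprod, invN_mul_sigmaT_of_lt hbj.1 hj2 h]
          simp [hu_len]
      · exact absurd ((wordProd s).injective h) (by omega)
      · have hcross : (wordProd u) (j + 1) < (wordProd u) j := by rw [hu_prod]; exact h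
        obtain ⟨m, hm, heq⟩ := exchange_aux u j (j + 1) (lt_add_one j) hcross
        rw [swap_eq_sigmaT, hu_prod] at heq
        refine ⟨u.eraseIdx m,
          ((u.eraseIdx_sublist m).trans hus).trans (List.sublist_append_left s [j]),
          isReducedWord_iff.mpr ⟨⟨?_, ?_⟩, ?_⟩⟩
        · intro i hi
          exact hu_bound i ((u.eraseIdx_sublist m).mem hi)
        · rw [heq, hprod]
        · rw [hprod]
          have hlen : (u.eraseIdx m).length = u.length - 1 := by
            rw [List.length_eraseIdx]
            simp [hm]
          have hstep := invN_mul_sigmaT_of_gt hbj.1 hj2 h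
          have hpos : 1 ≤ u.length := by omega
          omega

/-! ### Section E : braid moves and Matsumoto -/

lemma sigmaT_apply_of_ne {b a : ℕ} (h1 : a ≠ b) (h2 : a ≠ b + 1) : sigmaT b a = a := by
  rw [sigmaT_apply, if_neg h1, if_neg h2]

lemma sigmaT_comm {i j : ℕ} (h : i + 2 ≤ j ∨ j + 2 ≤ i) :
    sigmaT i * sigmaT j = sigmaT j * sigmaT i := by
  apply Equiv.ext
  intro x
  simp only [Equiv.Perm.mul_apply, sigmaT_apply]
  split_ifs <;> omega

set_option maxHeartbeats 2000000 in
lemma sigmaT_braid (i : ℕ) :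
    sigmaT i * sigmaT (i + 1) * sigmaT i = sigmaT (i + 1) * sigmaT i * sigmaT (i + 1) := by
  apply Equiv.ext
  intro x
  simp only [Equiv.Perm.mul_apply, sigmaT_apply]
  split_ifs <;> omega

inductive BraidMove : List ℕ → List ℕ → Prop
  | comm (c d : List ℕ) (i j : ℕ) (h : i + 2 ≤ j ∨ j + 2 ≤ i) :
      BraidMove (c ++ [i, j] ++ d) (c ++ [j, i] ++ d)
  | braid (c d : List ℕ) (i : ℕ) :
      BraidMove (c ++ [i, i + 1, i] ++ d) (c ++ [i + 1, i, i + 1] ++ d)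
  | braid' (c d : List ℕ) (i : ℕ) :
      BraidMove (c ++ [i + 1, i, i + 1] ++ d) (c ++ [i, i + 1, i] ++ d)

lemma braidMove_symm {s t : List ℕ} (h : BraidMove s t) : BraidMove t s := by
  cases h with
  | comm c d i j h => exact BraidMove.comm c d j i h.symm
  | braid c d i => exact BraidMove.braid' c d i
  | braid' c d i => exact BraidMove.braid c d i

lemma braidMove_prod {s t : List ℕ} (h : BraidMove s t) : wordProd s = wordProd t := by
  cases h with
  | comm c d i j h =>
      simp only [wordProd_append]
      congr 1
      congr 1
      show wordProd [i, j] = wordProd [j, i]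
      simp only [wordProd, List.map_cons, List.map_nil, List.prod_cons, List.prod_nil,
        mul_one]
      exact sigmaT_comm h
  | braid c d i =>
      simp only [wordProd_append]
      congr 1
      congr 1
      show wordProd [i, i + 1, i] = wordProd [i + 1, i, i + 1]
      simp only [wordProd, List.map_cons, List.map_nil, List.prod_cons, List.prod_nil,
        mul_one, ← mul_assoc]
      exact sigmaT_braid i
  | braid' c d i =>
      simp only [wordProd_append]
      congr 1
      congr 1
      show wordProd [i + 1, i, i + 1] = wordProd [i, i + 1, i]
      simp only [wordProd, List.map_cons, List.map_nil, List.prod_cons, List.prod_nil,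
        mul_one, ← mul_assoc]
      exact (sigmaT_braid i).symm

lemma braidMove_length {s t : List ℕ} (h : BraidMove s t) : s.length = t.length := by
  cases h <;> simp

lemma braidMove_bounds {n : ℕ} {s t : List ℕ} (h : BraidMove s t)
    (hb : ∀ j ∈ s, 1 ≤ j ∧ j ≤ n - 1) : ∀ j ∈ t, 1 ≤ j ∧ j ≤ n - 1 := by
  cases h with
  | comm c d i j hij =>
      intro x hx
      apply hb
      simp only [List.append_assoc, List.mem_append, List.mem_cons,
        List.not_mem_nil, or_false] at hx ⊢
      tauto
  | braid c d i =>
      intro x hx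
      apply hb
      simp only [List.append_assoc, List.mem_append, List.mem_cons,
        List.not_mem_nil, or_false] at hx ⊢
      tauto
  | braid' c d i =>
      intro x hx
      apply hb
      simp only [List.append_assoc, List.mem_append, List.mem_cons,
        List.not_mem_nil, or_false] at hx ⊢
      tauto

lemma braidChain_reduced {n : ℕ} {w : Equiv.Perm ℕ} {s t : List ℕ}
    (h : Relation.ReflTransGen BraidMove s t) (hs : IsReducedWord n w s) :
    IsReducedWord n w t := by
  induction h with
  | refl => exact hs
  | tail _ hmove ih =>
      rw [isReducedWord_iff] at ih ⊢
      obtain ⟨⟨hb, hp⟩, hl⟩ := ih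
      exact ⟨⟨braidMove_bounds hmove hb, (braidMove_prod hmove).symm.trans hp⟩,
        (braidMove_length hmove).symm.trans hl⟩

lemma braidChain_cons {a : ℕ} {s t : List ℕ} (h : Relation.ReflTransGen BraidMove s t) :
    Relation.ReflTransGen BraidMove (a :: s) (a :: t) := by
  refine Relation.ReflTransGen.lift (fun l => a :: l) ?_ _ _ h
  intro x y hxy
  cases hxy with
  | comm c d i j hij => exact BraidMove.comm (a :: c) d i j hij
  | braid c d i => exact BraidMove.braid (a :: c) d i
  | braid' c d i => exact BraidMove.braid' (a :: c) d i

/-- unpacking a reduced word starting with a letter -/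
lemma reduced_cons {n : ℕ} {w : Equiv.Perm ℕ} {a : ℕ} {s₂ : List ℕ}
    (h : IsReducedWord n w (a :: s₂)) :
    IsReducedWord n (sigmaT a * w) s₂ ∧ invN n (sigmaT a * w) + 1 = invN n w ∧
      (w⁻¹ : Equiv.Perm ℕ) (a + 1) < (w⁻¹ : Equiv.Perm ℕ) a ∧ 1 ≤ a ∧ a ≤ n - 1 := by
  rw [isReducedWord_iff] at h
  obtain ⟨⟨hb, hp⟩, hl⟩ := h
  have hw : MemSymm n w := by
    rw [← hp]; exact memSymm_wordProd hb
  have hba := hb a (by simp)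
  have ha2 : a + 1 ≤ n := by omega
  have hprod : wordProd s₂ = sigmaT a * w := by
    rw [← hp, wordProd_cons, ← mul_assoc, sigmaT_mul_self, one_mul]
  have hbs : ∀ j ∈ s₂, 1 ≤ j ∧ j ≤ n - 1 := fun j hj => hb j (by simp [hj])
  have hlen : s₂.length + 1 = invN n w := by simpa using hl
  have hle : invN n (sigmaT a * w) ≤ s₂.length := hprod ▸ invN_le_length s₂ hbs
  have hdesc : (w⁻¹ : Equiv.Perm ℕ) (a + 1) < (w⁻¹ : Equiv.Perm ℕ) a := by
    rcases lt_trichotomy ((w⁻¹ : Equiv.Perm ℕ) a) ((w⁻¹ : Equiv.Perm ℕ) (a + 1)) with hc | hc | hc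
    · have := invN_sigmaT_mul_of_lt hw hba.1 ha2 hc
      omega
    · exact absurd ((w⁻¹ : Equiv.Perm ℕ).injective hc) (by omega)
    · exact hc
  have hstep := invN_sigmaT_mul_of_gt hw hba.1 ha2 hdesc
  refine ⟨isReducedWord_iff.mpr ⟨⟨hbs, hprod⟩, by omega⟩, by omega, hdesc, hba.1, hba.2⟩

/-- packing: making a reduced word starting with a given descent -/
lemma reduced_cons_of {n : ℕ} {w : Equiv.Perm ℕ} {k : ℕ} {r : List ℕ} (hw : MemSymm n w)
    (h1 : 1 ≤ k) (h2 : k ≤ n - 1)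
    (hd : (w⁻¹ : Equiv.Perm ℕ) (k + 1) < (w⁻¹ : Equiv.Perm ℕ) k)
    (hr : IsReducedWord n (sigmaT k * w) r) : IsReducedWord n w (k :: r) := by
  rw [isReducedWord_iff] at hr ⊢
  obtain ⟨⟨hb, hp⟩, hl⟩ := hr
  have hstep := invN_sigmaT_mul_of_gt hw h1 (by omega) hd
  refine ⟨⟨?_, ?_⟩, ?_⟩
  · intro j hj
    rcases List.mem_cons.mp hj with h | h
    · subst h; exact ⟨h1, h2⟩
    · exact hb j h
  · rw [wordProd_cons, hp, ← mul_assoc, sigmaT_mul_self, one_mul]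
  · simp only [List.length_cons, hl]
    omega

lemma braidChain_symm {s t : List ℕ} (h : Relation.ReflTransGen BraidMove s t) :
    Relation.ReflTransGen BraidMove t s := by
  induction h with
  | refl => exact Relation.ReflTransGen.refl
  | tail _ hmv ih =>
      exact Relation.ReflTransGen.trans (Relation.ReflTransGen.single (braidMove_symm hmv)) ih

lemma inv_sigmaT_mul_apply (k : ℕ) (w : Equiv.Perm ℕ) (x : ℕ) :
    ((sigmaT k * w)⁻¹ : Equiv.Perm ℕ) x = (w⁻¹ : Equiv.Perm ℕ) (sigmaT k x) := by
  rw [mul_inv_rev, sigmaT_inv]; rfl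

theorem matsumoto {n : ℕ} {w : Equiv.Perm ℕ} {s t : List ℕ}
    (hs : IsReducedWord n w s) (ht : IsReducedWord n w t) :
    Relation.ReflTransGen BraidMove s t := by
  suffices H : ∀ L (w : Equiv.Perm ℕ) (s t : List ℕ), invN n w = L → IsReducedWord n w s →
      IsReducedWord n w t → Relation.ReflTransGen BraidMove s t by
    exact H (invN n w) w s t rfl hs ht
  clear hs ht s t w
  intro L
  induction L using Nat.strong_induction_on with
  | _ L ih =>
    have braidcase : ∀ (w : Equiv.Perm ℕ) (a : ℕ) (s₂ t₂ : List ℕ), MemSymm n w →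
        invN n w = L → 1 ≤ a → a ≤ n - 1 → 1 ≤ a + 1 → a + 1 ≤ n - 1 →
        (w⁻¹ : Equiv.Perm ℕ) (a + 1) < (w⁻¹ : Equiv.Perm ℕ) a →
        (w⁻¹ : Equiv.Perm ℕ) (a + 2) < (w⁻¹ : Equiv.Perm ℕ) (a + 1) →
        IsReducedWord n (sigmaT a * w) s₂ → IsReducedWord n (sigmaT (a + 1) * w) t₂ →
        1 ≤ L →
        Relation.ReflTransGen BraidMove (a :: s₂) ((a + 1) :: t₂) := by
      intro w a s₂ t₂ hw hL ha1 ha2 hb1 hb2 hsdesc htdesc hs₂red ht₂red hpos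
      have hdtrans : (w⁻¹ : Equiv.Perm ℕ) (a + 2) < (w⁻¹ : Equiv.Perm ℕ) a :=
        lt_trans htdesc hsdesc
      have hwa : MemSymm n (sigmaT a * w) := memSymm_mul (memSymm_sigmaT ha1 ha2) hw
      have hwb : MemSymm n (sigmaT (a + 1) * w) := memSymm_mul (memSymm_sigmaT hb1 hb2) hw
      have hsstep := invN_sigmaT_mul_of_gt hw ha1 (by omega) hsdesc
      have htstep := invN_sigmaT_mul_of_gt hw hb1 (by omega) htdesc
      -- descent of σ_a w at a+1
      have hd1 : ((sigmaT a * w)⁻¹ : Equiv.Perm ℕ) (a + 1 + 1) <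
          ((sigmaT a * w)⁻¹ : Equiv.Perm ℕ) (a + 1) := by
        rw [inv_sigmaT_mul_apply, inv_sigmaT_mul_apply,
          sigmaT_apply_of_ne (by omega) (by omega), sigmaT_apply_succ]
        exact hdtrans
      have hstep2 := invN_sigmaT_mul_of_gt hwa hb1 (by omega) hd1
      have hw2 : MemSymm n (sigmaT (a + 1) * (sigmaT a * w)) :=
        memSymm_mul (memSymm_sigmaT hb1 hb2) hwa
      -- descent of σ_{a+1} σ_a w at a
      have hd2 : ((sigmaT (a + 1) * (sigmaT a * w))⁻¹ : Equiv.Perm ℕ) (a + 1) <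
          ((sigmaT (a + 1) * (sigmaT a * w))⁻¹ : Equiv.Perm ℕ) a := by
        rw [inv_sigmaT_mul_apply, inv_sigmaT_mul_apply, inv_sigmaT_mul_apply,
          inv_sigmaT_mul_apply]
        rw [show sigmaT (a + 1) (a + 1) = a + 1 + 1 from sigmaT_apply_self (a + 1)]
        rw [show sigmaT a (a + 1 + 1) = a + 1 + 1 from
          sigmaT_apply_of_ne (by omega) (by omega)]
        rw [show sigmaT (a + 1) a = a from sigmaT_apply_of_ne (by omega) (by omega)]
        rw [show sigmaT a a = a + 1 from sigmaT_apply_self a]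
        show w⁻¹ (a + 2) < w⁻¹ (a + 1)
        exact htdesc
      have hstep3 := invN_sigmaT_mul_of_gt hw2 ha1 (by omega) hd2
      obtain ⟨r, hr⟩ := exists_reducedWord
        (memSymm_mul (memSymm_sigmaT ha1 ha2) hw2)
      have hA : IsReducedWord n (sigmaT (a + 1) * (sigmaT a * w)) (a :: r) :=
        reduced_cons_of hw2 ha1 ha2 hd2 hr
      have hB : IsReducedWord n (sigmaT a * w) ((a + 1) :: a :: r) :=
        reduced_cons_of hwa hb1 hb2 hd1 hA
      -- other side: descent of σ_{a+1} w at a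
      have hd1' : ((sigmaT (a + 1) * w)⁻¹ : Equiv.Perm ℕ) (a + 1) <
          ((sigmaT (a + 1) * w)⁻¹ : Equiv.Perm ℕ) a := by
        rw [inv_sigmaT_mul_apply, inv_sigmaT_mul_apply,
          show sigmaT (a + 1) a = a from sigmaT_apply_of_ne (by omega) (by omega),
          show sigmaT (a + 1) (a + 1) = a + 2 from sigmaT_apply_self (a + 1)]
        exact hdtrans
      have hstep2' := invN_sigmaT_mul_of_gt hwb ha1 (by omega) hd1'
      have hw2' : MemSymm n (sigmaT a * (sigmaT (a + 1) * w)) :=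
        memSymm_mul (memSymm_sigmaT ha1 ha2) hwb
      -- descent of σ_a σ_{a+1} w at a+1
      have hd2' : ((sigmaT a * (sigmaT (a + 1) * w))⁻¹ : Equiv.Perm ℕ) (a + 1 + 1) <
          ((sigmaT a * (sigmaT (a + 1) * w))⁻¹ : Equiv.Perm ℕ) (a + 1) := by
        rw [inv_sigmaT_mul_apply, inv_sigmaT_mul_apply, inv_sigmaT_mul_apply,
          inv_sigmaT_mul_apply,
          show sigmaT a (a + 1 + 1) = a + 1 + 1 from sigmaT_apply_of_ne (by omega) (by omega),
          show sigmaT (a + 1) (a + 1 + 1) = a + 1 from sigmaT_apply_succ (a + 1),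
          show sigmaT a (a + 1) = a from sigmaT_apply_succ a,
          show sigmaT (a + 1) a = a from sigmaT_apply_of_ne (by omega) (by omega)]
        exact hsdesc
      have hkey : sigmaT (a + 1) * (sigmaT a * (sigmaT (a + 1) * w)) =
          sigmaT a * (sigmaT (a + 1) * (sigmaT a * w)) := by
        rw [← mul_assoc, ← mul_assoc, ← mul_assoc, ← mul_assoc, (sigmaT_braid a).symm]
      have hr' : IsReducedWord n (sigmaT (a + 1) * (sigmaT a * (sigmaT (a + 1) * w))) r := by
        rw [hkey]; exact hr
      have hA' : IsReducedWord n (sigmaT a * (sigmaT (a + 1) * w)) ((a + 1) :: r) :=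
        reduced_cons_of hw2' hb1 hb2 hd2' hr'
      have hB' : IsReducedWord n (sigmaT (a + 1) * w) (a :: (a + 1) :: r) :=
        reduced_cons_of hwb ha1 ha2 hd1' hA'
      -- chains
      have c1 : Relation.ReflTransGen BraidMove s₂ ((a + 1) :: a :: r) :=
        ih (L - 1) (by omega) (sigmaT a * w) _ _ (by omega) hs₂red hB
      have c2 : Relation.ReflTransGen BraidMove (a :: (a + 1) :: r) t₂ :=
        ih (L - 1) (by omega) (sigmaT (a + 1) * w) _ _ (by omega) hB' ht₂red
      have m : BraidMove (a :: (a + 1) :: a :: r) ((a + 1) :: a :: (a + 1) :: r) := by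
        have := BraidMove.braid [] r a
        simpa using this
      exact ((braidChain_cons c1).trans (Relation.ReflTransGen.single m)).trans
        (braidChain_cons c2)
    intro w s t hL hs ht
    have hw : MemSymm n w := isWord_memSymm hs.1
    have hslen : s.length = L := hL ▸ (isReducedWord_iff.mp hs).2
    have htlen : t.length = L := hL ▸ (isReducedWord_iff.mp ht).2
    rcases Nat.eq_zero_or_pos L with h0 | hpos
    · subst h0
      rw [List.length_eq_zero_iff] at hslen htlen
      subst hslen; subst htlen
      exact Relation.ReflTransGen.refl
    · obtain ⟨a, s₂, rfl⟩ : ∃ a s₂, s = a :: s₂ := by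
        cases s with
        | nil => simp at hslen; omega
        | cons a s₂ => exact ⟨a, s₂, rfl⟩
      obtain ⟨b, t₂, rfl⟩ : ∃ b t₂, t = b :: t₂ := by
        cases t with
        | nil => simp at htlen; omega
        | cons b t₂ => exact ⟨b, t₂, rfl⟩
      obtain ⟨hs₂red, hsstep, hsdesc, ha1, ha2⟩ := reduced_cons hs
      obtain ⟨ht₂red, htstep, htdesc, hb1, hb2⟩ := reduced_cons ht
      rcases eq_or_ne a b with rfl | hab
      · exact braidChain_cons (ih (L - 1) (by omega) (sigmaT a * w) s₂ t₂ (by omega) hs₂red ht₂red)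
      · rcases (by omega : (a + 2 ≤ b ∨ b + 2 ≤ a) ∨ b = a + 1 ∨ a = b + 1) with hcomm | hbr | hbr
        · -- commuting case
          have hwa : MemSymm n (sigmaT a * w) := memSymm_mul (memSymm_sigmaT ha1 ha2) hw
          have hwb : MemSymm n (sigmaT b * w) := memSymm_mul (memSymm_sigmaT hb1 hb2) hw
          have hdb : ((sigmaT a * w)⁻¹ : Equiv.Perm ℕ) (b + 1) <
              ((sigmaT a * w)⁻¹ : Equiv.Perm ℕ) b := by
            rw [inv_sigmaT_mul_apply, inv_sigmaT_mul_apply,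
              sigmaT_apply_of_ne (by omega) (by omega),
              sigmaT_apply_of_ne (by omega) (by omega)]
            exact htdesc
          have hda : ((sigmaT b * w)⁻¹ : Equiv.Perm ℕ) (a + 1) <
              ((sigmaT b * w)⁻¹ : Equiv.Perm ℕ) a := by
            rw [inv_sigmaT_mul_apply, inv_sigmaT_mul_apply,
              sigmaT_apply_of_ne (by omega) (by omega),
              sigmaT_apply_of_ne (by omega) (by omega)]
            exact hsdesc
          have hv := invN_sigmaT_mul_of_gt hwa hb1 (by omega) hdb
          obtain ⟨r, hr⟩ := exists_reducedWord
            (memSymm_mul (memSymm_sigmaT hb1 hb2) hwa)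
          have h1 : IsReducedWord n (sigmaT a * w) (b :: r) :=
            reduced_cons_of hwa hb1 hb2 hdb hr
          have hvv : sigmaT a * (sigmaT b * w) = sigmaT b * (sigmaT a * w) := by
            rw [← mul_assoc, ← mul_assoc, sigmaT_comm hcomm]
          have hr2 : IsReducedWord n (sigmaT a * (sigmaT b * w)) r := by
            rw [hvv]; exact hr
          have h2 : IsReducedWord n (sigmaT b * w) (a :: r) :=
            reduced_cons_of hwb ha1 ha2 hda hr2
          have c1 : Relation.ReflTransGen BraidMove s₂ (b :: r) :=
            ih (L - 1) (by omega) (sigmaT a * w) _ _ (by omega) hs₂red h1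
          have c2 : Relation.ReflTransGen BraidMove (a :: r) t₂ :=
            ih (L - 1) (by omega) (sigmaT b * w) _ _ (by omega) h2 ht₂red
          have m : BraidMove (a :: b :: r) (b :: a :: r) := by
            have := BraidMove.comm [] r a b hcomm
            simpa using this
          exact ((braidChain_cons c1).trans (Relation.ReflTransGen.single m)).trans
            (braidChain_cons c2)
        · -- b = a + 1
          subst hbr
          exact braidcase w a s₂ t₂ hw hL ha1 ha2 hb1 hb2 hsdesc
            (by simpa using htdesc) hs₂red ht₂red hpos
        · -- a = b + 1
          subst hbr
          exact braidChain_symm (braidcase w b t₂ s₂ hw hL hb1 hb2 ha1 ha2 htdesc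
            (by simpa using hsdesc) ht₂red hs₂red hpos)

/-! ### Section F : subwords -/

def SubP (t : List ℕ) (v : Equiv.Perm ℕ) : Prop := ∃ u : List ℕ, u.Sublist t ∧ wordProd u = v

lemma wordProd_pair (x y : ℕ) : wordProd [x, y] = sigmaT x * sigmaT y := by
  simp [wordProd]

lemma wordProd_triple (x y z : ℕ) : wordProd [x, y, z] = sigmaT x * sigmaT y * sigmaT z := by
  simp [wordProd, mul_assoc]

lemma sublist_singleton' {u : List ℕ} {x : ℕ} (h : u.Sublist [x]) : u = [] ∨ u = [x] := by
  cases h with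
  | cons _ h' => left; exact List.sublist_nil.mp h'
  | cons_cons _ h' => right; rw [List.sublist_nil.mp h']

lemma sublist_pair {u : List ℕ} {x y : ℕ} (h : u.Sublist [x, y]) :
    u = [] ∨ u = [x] ∨ u = [y] ∨ u = [x, y] := by
  have : ([x, y] : List ℕ) = [x] ++ [y] := rfl
  rw [this, List.sublist_append_iff] at h
  obtain ⟨u1, u2, rfl, h1, h2⟩ := h
  rcases sublist_singleton' h1 with rfl | rfl <;> rcases sublist_singleton' h2 with rfl | rfl <;>
    simp

lemma sublist_triple {u : List ℕ} {x y z : ℕ} (h : u.Sublist [x, y, z]) :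
    u = [] ∨ u = [x] ∨ u = [y] ∨ u = [z] ∨ u = [x, y] ∨ u = [x, z] ∨ u = [y, z] ∨
      u = [x, y, z] := by
  have : ([x, y, z] : List ℕ) = [x, y] ++ [z] := rfl
  rw [this, List.sublist_append_iff] at h
  obtain ⟨u1, u2, rfl, h1, h2⟩ := h
  rcases sublist_pair h1 with rfl | rfl | rfl | rfl <;>
    rcases sublist_singleton' h2 with rfl | rfl <;> simp

lemma subP_braidMove {t t' : List ℕ} {v : Equiv.Perm ℕ} (h : BraidMove t t') (hv : SubP t v) :
    SubP t' v := by
  obtain ⟨u, hsub, hprod⟩ := hv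
  cases h with
  | comm c d i j hij =>
      rw [List.sublist_append_iff] at hsub
      obtain ⟨u1, u2, rfl, h1, h2⟩ := hsub
      rw [List.sublist_append_iff] at h1
      obtain ⟨u3, u4, rfl, h3, h4⟩ := h1
      have key : ∃ u4' : List ℕ, u4'.Sublist [j, i] ∧ wordProd u4' = wordProd u4 := by
        rcases sublist_pair h4 with rfl | rfl | rfl | rfl
        · exact ⟨[], List.nil_sublist _, rfl⟩
        · exact ⟨[i], (List.Sublist.refl [i]).cons j, rfl⟩
        · exact ⟨[j], (List.nil_sublist [i]).cons₂ j, rfl⟩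
        · exact ⟨[j, i], List.Sublist.refl _, by
            rw [wordProd_pair, wordProd_pair, sigmaT_comm hij]⟩
      obtain ⟨u4', hs4, hp4⟩ := key
      refine ⟨u3 ++ u4' ++ u2, ?_, ?_⟩
      · exact ((h3.append hs4).append h2)
      · rw [wordProd_append, wordProd_append, hp4, ← wordProd_append, ← wordProd_append]
        exact hprod
  | braid c d i =>
      rw [List.sublist_append_iff] at hsub
      obtain ⟨u1, u2, rfl, h1, h2⟩ := hsub
      rw [List.sublist_append_iff] at h1
      obtain ⟨u3, u4, rfl, h3, h4⟩ := h1
      have key : ∃ u4' : List ℕ, u4'.Sublist [i + 1, i, i + 1] ∧ wordProd u4' = wordProd u4 := by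
        rcases sublist_triple h4 with rfl | rfl | rfl | rfl | rfl | rfl | rfl | rfl
        · exact ⟨[], List.nil_sublist _, rfl⟩
        · exact ⟨[i], (((List.nil_sublist [i + 1]).cons₂ i).cons (i + 1)), rfl⟩
        · exact ⟨[i + 1], ((List.nil_sublist [i, i + 1]).cons₂ (i + 1)), rfl⟩
        · exact ⟨[i], (((List.nil_sublist [i + 1]).cons₂ i).cons (i + 1)), rfl⟩
        · exact ⟨[i, i + 1], (List.Sublist.refl [i, i + 1]).cons (i + 1), rfl⟩
        · -- [i, i] : product is 1
          exact ⟨[], List.nil_sublist _, by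
            rw [wordProd_pair, sigmaT_mul_self, wordProd_nil]⟩
        · exact ⟨[i + 1, i], (((List.nil_sublist [i + 1]).cons₂ i).cons₂ (i + 1)), rfl⟩
        · exact ⟨[i + 1, i, i + 1], List.Sublist.refl _, by
            rw [wordProd_triple, wordProd_triple, sigmaT_braid]⟩
      obtain ⟨u4', hs4, hp4⟩ := key
      refine ⟨u3 ++ u4' ++ u2, ?_, ?_⟩
      · exact ((h3.append hs4).append h2)
      · rw [wordProd_append, wordProd_append, hp4, ← wordProd_append, ← wordProd_append]
        exact hprod
  | braid' c d i =>
      rw [List.sublist_append_iff] at hsub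
      obtain ⟨u1, u2, rfl, h1, h2⟩ := hsub
      rw [List.sublist_append_iff] at h1
      obtain ⟨u3, u4, rfl, h3, h4⟩ := h1
      have key : ∃ u4' : List ℕ, u4'.Sublist [i, i + 1, i] ∧ wordProd u4' = wordProd u4 := by
        rcases sublist_triple h4 with rfl | rfl | rfl | rfl | rfl | rfl | rfl | rfl
        · exact ⟨[], List.nil_sublist _, rfl⟩
        · exact ⟨[i + 1], (((List.nil_sublist [i]).cons₂ (i + 1)).cons i), rfl⟩
        · exact ⟨[i], ((List.nil_sublist [i + 1, i]).cons₂ i), rfl⟩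
        · exact ⟨[i + 1], (((List.nil_sublist [i]).cons₂ (i + 1)).cons i), rfl⟩
        · exact ⟨[i + 1, i], (List.Sublist.refl [i + 1, i]).cons i, rfl⟩
        · -- [i+1, i+1] : product is 1
          exact ⟨[], List.nil_sublist _, by
            rw [wordProd_pair, sigmaT_mul_self, wordProd_nil]⟩
        · exact ⟨[i, i + 1], (((List.nil_sublist [i]).cons₂ (i + 1)).cons₂ i), rfl⟩
        · exact ⟨[i, i + 1, i], List.Sublist.refl _, by
            rw [wordProd_triple, wordProd_triple, sigmaT_braid]⟩
      obtain ⟨u4', hs4, hp4⟩ := key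
      refine ⟨u3 ++ u4' ++ u2, ?_, ?_⟩
      · exact ((h3.append hs4).append h2)
      · rw [wordProd_append, wordProd_append, hp4, ← wordProd_append, ← wordProd_append]
        exact hprod

lemma subP_chain {t t' : List ℕ} {v : Equiv.Perm ℕ}
    (h : Relation.ReflTransGen BraidMove t t') (hv : SubP t v) : SubP t' v := by
  induction h with
  | refl => exact hv
  | tail _ hmv ih => exact subP_braidMove hmv ih

/-- The principal ideal is the set of subword products of any fixed reduced word. -/
lemma bruhatLE_iff_subP {n : ℕ} {w : Equiv.Perm ℕ} {t₀ : List ℕ}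
    (ht₀ : IsReducedWord n w t₀) (v : Equiv.Perm ℕ) :
    BruhatLE n v w ↔ SubP t₀ v := by
  constructor
  · rintro ⟨u, t', hu, ht', hsub⟩
    have hchain := matsumoto ht' ht₀
    exact subP_chain hchain ⟨u, hsub, hu.1.2⟩
  · rintro ⟨u, hsub, hprod⟩
    have hb : ∀ j ∈ u, 1 ≤ j ∧ j ≤ n - 1 := fun j hj => ht₀.1.1 j (hsub.mem hj)
    obtain ⟨u', hsub', hred'⟩ := exists_reduced_sublist u hb
    rw [hprod] at hred'
    exact ⟨u', t₀, hred', ht₀, hsub'.trans hsub⟩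

/-! ### Section G : parabolic predicates, lemmas W and K -/

def Qp (i : ℕ) (v : Equiv.Perm ℕ) : Prop := ∀ x, x ≤ i → v x ≤ i

lemma Qp_one (i : ℕ) : Qp i 1 := fun x hx => hx

lemma Qp_sigmaT {i j : ℕ} (h : j ≠ i) : Qp i (sigmaT j) := by
  intro x hx
  rw [sigmaT_apply]
  split_ifs <;> omega

lemma Qp_mul {i : ℕ} {v w : Equiv.Perm ℕ} (hv : Qp i v) (hw : Qp i w) : Qp i (v * w) :=
  fun x hx => hv _ (hw x hx)

lemma Qp_wordProd {i : ℕ} {s : List ℕ} (h : i ∉ s) : Qp i (wordProd s) := by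
  induction s with
  | nil => exact Qp_one i
  | cons j t ih =>
      rw [wordProd_cons]
      exact Qp_mul (Qp_sigmaT (fun hj => h (hj ▸ List.mem_cons_self (a := j) (l := t))))
        (ih fun hi => h (List.mem_cons_of_mem j hi))

lemma perm_onto_of_maps_to {g : Equiv.Perm ℕ} {k : ℕ} (h : ∀ x, x < k → g x < k) :
    ∀ y, y < k → ∃ x, x < k ∧ g x = y := by
  intro y hy
  have hsub : (Finset.range k).image g ⊆ Finset.range k := by
    intro z hz
    rw [Finset.mem_image] at hz
    obtain ⟨x, hx, rfl⟩ := hz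
    rw [Finset.mem_range] at hx ⊢
    exact h x hx
  have hcard : ((Finset.range k).image g).card = (Finset.range k).card :=
    Finset.card_image_of_injective _ g.injective
  have := Finset.eq_of_subset_of_card_le hsub (le_of_eq hcard.symm)
  have hmem : y ∈ (Finset.range k).image g := by
    rw [this, Finset.mem_range]; exact hy
  rw [Finset.mem_image] at hmem
  obtain ⟨x, hx, hgx⟩ := hmem
  exact ⟨x, Finset.mem_range.mp hx, hgx⟩

lemma Qp_inv {i : ℕ} {g : Equiv.Perm ℕ} (h : Qp i g) : Qp i g⁻¹ := by
  intro y hy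
  obtain ⟨x, hx, hgx⟩ := perm_onto_of_maps_to
    (g := g) (k := i + 1) (fun x hx => Nat.lt_succ_of_le (h x (Nat.lt_succ_iff.mp hx)))
    y (Nat.lt_succ_of_le hy)
  rw [← hgx, Equiv.Perm.inv_def, Equiv.symm_apply_apply]
  exact Nat.lt_succ_iff.mp hx

lemma notQp {i : ℕ} {A B : Equiv.Perm ℕ} (hA : Qp i A) (hB : Qp i B) :
    ¬ Qp i (A * sigmaT i * B) := by
  intro hQ
  have h1 := hQ ((B⁻¹ : Equiv.Perm ℕ) i) (Qp_inv hB i le_rfl)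
  have h2 : (A * sigmaT i * B) ((B⁻¹ : Equiv.Perm ℕ) i) = A (i + 1) := by
    simp only [Equiv.Perm.mul_apply, Equiv.Perm.inv_def, Equiv.apply_symm_apply, sigmaT_apply_self]
  rw [h2] at h1
  have h3 := Qp_inv hA (A (i + 1)) h1
  rw [Equiv.Perm.inv_def, Equiv.symm_apply_apply] at h3
  omega

lemma wordProd_fixes {s : List ℕ} {p : ℕ} (h : ∀ j ∈ s, j ≠ p ∧ j + 1 ≠ p) :
    wordProd s p = p := by
  induction s with
  | nil => rfl
  | cons j t ih =>
      rw [wordProd_cons, Equiv.Perm.mul_apply, ih fun x hx => h x (List.mem_cons_of_mem j hx)]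
      have := h j (List.mem_cons_self (a := j) (l := t))
      exact sigmaT_apply_of_ne (Ne.symm this.1) (Ne.symm this.2)

lemma wordProd_comm_sigmaT {s : List ℕ} {i : ℕ} (h : ∀ j ∈ s, j + 2 ≤ i ∨ i + 2 ≤ j) :
    wordProd s * sigmaT i = sigmaT i * wordProd s := by
  induction s with
  | nil => rw [wordProd_nil, one_mul, mul_one]
  | cons j t ih =>
      have hj := h j (List.mem_cons_self (a := j) (l := t))
      have hcomm : sigmaT j * sigmaT i = sigmaT i * sigmaT j :=
        sigmaT_comm (by omega)
      rw [wordProd_cons, mul_assoc, ih fun x hx => h x (List.mem_cons_of_mem j hx),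
        ← mul_assoc, hcomm, mul_assoc]

lemma commute_of_fixed {g : Equiv.Perm ℕ} {i : ℕ} (h1 : g i = i) (h2 : g (i + 1) = i + 1) :
    g * sigmaT i = sigmaT i * g := by
  apply Equiv.ext
  intro x
  simp only [Equiv.Perm.mul_apply]
  rcases eq_or_ne x i with rfl | hxi
  · rw [sigmaT_apply_self, h2, h1, sigmaT_apply_self]
  rcases eq_or_ne x (i + 1) with rfl | hxi1
  · rw [sigmaT_apply_succ, h1, h2, sigmaT_apply_succ]
  · rw [sigmaT_apply_of_ne hxi hxi1, sigmaT_apply_of_ne]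
    · exact fun hc => hxi (g.injective (hc.trans h1.symm))
    · exact fun hc => hxi1 (g.injective (hc.trans h2.symm))

lemma fix_of {g : Equiv.Perm ℕ} {i : ℕ} (hi : 1 ≤ i) (hQ : Qp i g)
    (hlow : ∀ x, x ≤ i - 1 → g x ≤ i - 1) : g i = i := by
  have h1 : g i ≤ i := hQ i le_rfl
  rcases eq_or_ne (g i) i with h | h
  · exact h
  · exfalso
    have h2 : g i < i := by omega
    obtain ⟨x, hx, hgx⟩ := perm_onto_of_maps_to (g := g) (k := i)
      (fun x hx => by
        have := hlow x (by omega)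
        omega)
      (g i) h2
    have := g.injective hgx
    omega

/-- The core of Lemma K : if `g σᵢ = σᵢ h` with `g`, `h` from suitable parabolics,
then `g = h` and both commute with `σᵢ`. -/
lemma k_core_case3 {i : ℕ} (hi : 1 ≤ i) {g h : Equiv.Perm ℕ}
    (heq : g * sigmaT i = sigmaT i * h)
    (hQg : Qp i g) (hgfix : g (i + 1) = i + 1)
    (hQh : Qp (i - 1) h) (hhfix : h i = i) : g = h := by
  have hconj : ∀ x, g x = sigmaT i (h (sigmaT i x)) := by
    intro x
    have : (g * sigmaT i) (sigmaT i x) = (sigmaT i * h) (sigmaT i x) := by rw [heq]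
    simpa only [Equiv.Perm.mul_apply, sigmaT_invol] using this
  have hlow : ∀ x, x ≤ i - 1 → g x ≤ i - 1 := by
    intro x hx
    have hxi : x ≠ i := by omega
    have hxi1 : x ≠ i + 1 := by omega
    have hhx := hQh x hx
    rw [hconj x, sigmaT_apply_of_ne hxi hxi1, sigmaT_apply_of_ne (by omega) (by omega)]
    exact hhx
  have hgi : g i = i := fix_of hi hQg hlow
  have hcomm : g * sigmaT i = sigmaT i * g := commute_of_fixed hgi hgfix
  have : sigmaT i * h = sigmaT i * g := by rw [← heq, hcomm]
  exact (mul_left_cancel this).symm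

lemma k_core_case4 {i : ℕ} (hi : 1 ≤ i) {g h : Equiv.Perm ℕ}
    (heq : g * sigmaT i = sigmaT i * h)
    (hQh : Qp i h) (hhfix : h (i + 1) = i + 1)
    (hQg : Qp (i - 1) g) (hgfix : g i = i) : g = h := by
  have hconj : ∀ x, h x = sigmaT i (g (sigmaT i x)) := by
    intro x
    have h1 : (sigmaT i) (h x) = g ((sigmaT i) x) := by
      have : (sigmaT i * h) x = (g * sigmaT i) x := by rw [heq]
      simpa only [Equiv.Perm.mul_apply] using this
    have h2 := congrArg (sigmaT i) h1
    rwa [sigmaT_invol] at h2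
  have hlow : ∀ x, x ≤ i - 1 → h x ≤ i - 1 := by
    intro x hx
    have hxi : x ≠ i := by omega
    have hxi1 : x ≠ i + 1 := by omega
    have hgx := hQg x hx
    rw [hconj x, sigmaT_apply_of_ne hxi hxi1, sigmaT_apply_of_ne (by omega) (by omega)]
    exact hgx
  have hhi : h i = i := fix_of hi hQh hlow
  have hcomm : h * sigmaT i = sigmaT i * h := commute_of_fixed hhi hhfix
  have : g * sigmaT i = h * sigmaT i := by rw [heq, hcomm]
  exact mul_right_cancel this

/-! ### Section H1 : the toggle equivalence -/

lemma comm_inv {G : Type*} [Group G] {x y : G} (h : x * y = y * x) : x⁻¹ * y = y * x⁻¹ := by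
  have key : x * (x⁻¹ * y) * x = x * (y * x⁻¹) * x := by
    calc x * (x⁻¹ * y) * x = y * x := by group
      _ = x * y := h.symm
      _ = x * (y * x⁻¹) * x := by group
  exact mul_left_cancel (mul_right_cancel key)

lemma fix_inv {v : Equiv.Perm ℕ} {p : ℕ} (h : v p = p) : (v⁻¹ : Equiv.Perm ℕ) p = p := by
  rw [Equiv.Perm.inv_eq_iff_eq]
  exact h.symm

lemma wordProd_fixes_succ {s : List ℕ} {i : ℕ} (h1 : i + 1 ∉ s) (h2 : i ∉ s) :
    wordProd s (i + 1) = i + 1 :=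
  wordProd_fixes (fun j hj => ⟨fun hc => h1 (hc ▸ hj),
    fun hc => h2 ((by omega : j = i) ▸ hj)⟩)

lemma wordProd_fixes_base {s : List ℕ} {i : ℕ} (hi : 1 ≤ i) (h1 : i ∉ s) (h2 : i - 1 ∉ s) :
    wordProd s i = i :=
  wordProd_fixes (fun j hj => ⟨fun hc => h1 (hc ▸ hj),
    fun hc => h2 ((by omega : j = i - 1) ▸ hj)⟩)

lemma toggle_iff {i : ℕ} (hi : 1 ≤ i) {a b ua ub va vb : List ℕ}
    (hua : ua.Sublist a) (hub : ub.Sublist b) (hva : va.Sublist a) (hvb : vb.Sublist b)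
    (hia : i ∉ a) (hib : i ∉ b)
    (hc1 : ¬(i + 1 ∈ a ∧ i + 1 ∈ b)) (hc2 : ¬(i - 1 ∈ a ∧ i - 1 ∈ b)) :
    (wordProd ua * sigmaT i * wordProd ub = wordProd va * sigmaT i * wordProd vb) ↔
      (wordProd ua * wordProd ub = wordProd va * wordProd vb) := by
  have hiua : i ∉ ua := fun h => hia (hua.subset h)
  have hiub : i ∉ ub := fun h => hib (hub.subset h)
  have hiva : i ∉ va := fun h => hia (hva.subset h)
  have hivb : i ∉ vb := fun h => hib (hvb.subset h)
  have hcase : ((wordProd va)⁻¹ * wordProd ua) * sigmaT i =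
      sigmaT i * (wordProd vb * (wordProd ub)⁻¹) ↔
      (wordProd va)⁻¹ * wordProd ua = wordProd vb * (wordProd ub)⁻¹ := by
    rcases not_and_or.mp hc1 with h1 | h1 <;> rcases not_and_or.mp hc2 with h2 | h2
    · -- i+1 ∉ a, i-1 ∉ a : g commutes with σᵢ
      have hcm : ∀ s : List ℕ, s.Sublist a → wordProd s * sigmaT i = sigmaT i * wordProd s := by
        intro s hs
        apply wordProd_comm_sigmaT
        intro j hj
        have hj1 : j ≠ i := fun hc => hia (hc ▸ hs.subset hj)
        have hj2 : j ≠ i + 1 := fun hc => h1 (hc ▸ hs.subset hj)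
        have hj3 : j ≠ i - 1 := fun hc => h2 (hc ▸ hs.subset hj)
        omega
      have hcg : ((wordProd va)⁻¹ * wordProd ua) * sigmaT i =
          sigmaT i * ((wordProd va)⁻¹ * wordProd ua) := by
        rw [mul_assoc, hcm ua hua, ← mul_assoc, comm_inv (hcm va hva), mul_assoc]
      constructor
      · intro H
        exact mul_left_cancel (a := sigmaT i) (by rw [← hcg, H])
      · intro H
        rw [← H, hcg, H]
    · -- i+1 ∉ a, i-1 ∉ b : case 3
      have hQg : Qp i ((wordProd va)⁻¹ * wordProd ua) :=
        Qp_mul (Qp_inv (Qp_wordProd hiva)) (Qp_wordProd hiua)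
      have hfixg : ((wordProd va)⁻¹ * wordProd ua) (i + 1) = i + 1 := by
        have f1 : wordProd ua (i + 1) = i + 1 :=
          wordProd_fixes_succ (fun h => h1 (hua.subset h)) hiua
        have f2 : wordProd va (i + 1) = i + 1 :=
          wordProd_fixes_succ (fun h => h1 (hva.subset h)) hiva
        simp only [Equiv.Perm.mul_apply, f1, fix_inv f2]
      have hQh : Qp (i - 1) (wordProd vb * (wordProd ub)⁻¹) := by
        apply Qp_mul
        · apply Qp_wordProd
          exact fun h => h2 (hvb.subset h)
        · apply Qp_inv
          apply Qp_wordProd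
          exact fun h => h2 (hub.subset h)
      have hfixh : (wordProd vb * (wordProd ub)⁻¹) i = i := by
        have f1 : wordProd ub i = i :=
          wordProd_fixes_base hi hiub (fun h => h2 (hub.subset h))
        have f2 : wordProd vb i = i :=
          wordProd_fixes_base hi hivb (fun h => h2 (hvb.subset h))
        simp only [Equiv.Perm.mul_apply, fix_inv f1, f2]
      constructor
      · intro H
        exact k_core_case3 hi H hQg hfixg hQh hfixh
      · intro H
        have hgi : ((wordProd va)⁻¹ * wordProd ua) i = i := by rw [H]; exact hfixh
        have := commute_of_fixed hgi hfixg
        rw [this, H]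
    · -- i-1 ∉ a, i+1 ∉ b : case 4
      have hQh : Qp i (wordProd vb * (wordProd ub)⁻¹) :=
        Qp_mul (Qp_wordProd hivb) (Qp_inv (Qp_wordProd hiub))
      have hfixh : (wordProd vb * (wordProd ub)⁻¹) (i + 1) = i + 1 := by
        have f1 : wordProd ub (i + 1) = i + 1 :=
          wordProd_fixes_succ (fun h => h1 (hub.subset h)) hiub
        have f2 : wordProd vb (i + 1) = i + 1 :=
          wordProd_fixes_succ (fun h => h1 (hvb.subset h)) hivb
        simp only [Equiv.Perm.mul_apply, fix_inv f1, f2]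
      have hQg : Qp (i - 1) ((wordProd va)⁻¹ * wordProd ua) := by
        apply Qp_mul
        · apply Qp_inv
          apply Qp_wordProd
          exact fun h => h2 (hva.subset h)
        · apply Qp_wordProd
          exact fun h => h2 (hua.subset h)
      have hfixg : ((wordProd va)⁻¹ * wordProd ua) i = i := by
        have f1 : wordProd ua i = i :=
          wordProd_fixes_base hi hiua (fun h => h2 (hua.subset h))
        have f2 : wordProd va i = i :=
          wordProd_fixes_base hi hiva (fun h => h2 (hva.subset h))
        simp only [Equiv.Perm.mul_apply, f1, fix_inv f2]
      constructor
      · intro H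
        exact k_core_case4 hi H hQh hfixh hQg hfixg
      · intro H
        have hhfix1 : (wordProd vb * (wordProd ub)⁻¹) i = i := by rw [← H]; exact hfixg
        have := commute_of_fixed hhfix1 hfixh
        rw [H, ← this]
    · -- i+1 ∉ b, i-1 ∉ b : h commutes with σᵢ
      have hcm : ∀ s : List ℕ, s.Sublist b → wordProd s * sigmaT i = sigmaT i * wordProd s := by
        intro s hs
        apply wordProd_comm_sigmaT
        intro j hj
        have hj1 : j ≠ i := fun hc => hib (hc ▸ hs.subset hj)
        have hj2 : j ≠ i + 1 := fun hc => h1 (hc ▸ hs.subset hj)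
        have hj3 : j ≠ i - 1 := fun hc => h2 (hc ▸ hs.subset hj)
        omega
      have hch : (wordProd vb * (wordProd ub)⁻¹) * sigmaT i =
          sigmaT i * (wordProd vb * (wordProd ub)⁻¹) := by
        rw [mul_assoc, comm_inv (hcm ub hub), ← mul_assoc, hcm vb hvb, mul_assoc]
      constructor
      · intro H
        exact mul_right_cancel (b := sigmaT i) (by rw [H, hch])
      · intro H
        rw [H, hch]
  constructor
  · intro H
    have step1 : ((wordProd va)⁻¹ * wordProd ua) * sigmaT i =
        sigmaT i * (wordProd vb * (wordProd ub)⁻¹) := by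
      calc ((wordProd va)⁻¹ * wordProd ua) * sigmaT i
          = (wordProd va)⁻¹ * (wordProd ua * sigmaT i * wordProd ub) * (wordProd ub)⁻¹ := by
            group
        _ = (wordProd va)⁻¹ * (wordProd va * sigmaT i * wordProd vb) * (wordProd ub)⁻¹ := by
            rw [H]
        _ = sigmaT i * (wordProd vb * (wordProd ub)⁻¹) := by group
    have step2 := hcase.mp step1
    calc wordProd ua * wordProd ub
        = wordProd va * ((wordProd va)⁻¹ * wordProd ua) * wordProd ub := by group
      _ = wordProd va * (wordProd vb * (wordProd ub)⁻¹) * wordProd ub := by rw [step2]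
      _ = wordProd va * wordProd vb := by group
  · intro H
    have step1 : (wordProd va)⁻¹ * wordProd ua = wordProd vb * (wordProd ub)⁻¹ := by
      calc (wordProd va)⁻¹ * wordProd ua
          = (wordProd va)⁻¹ * (wordProd ua * wordProd ub) * (wordProd ub)⁻¹ := by group
        _ = (wordProd va)⁻¹ * (wordProd va * wordProd vb) * (wordProd ub)⁻¹ := by rw [H]
        _ = wordProd vb * (wordProd ub)⁻¹ := by group
    have step2 := hcase.mpr step1
    calc wordProd ua * sigmaT i * wordProd ub
        = wordProd va * (((wordProd va)⁻¹ * wordProd ua) * sigmaT i) * wordProd ub := by group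
      _ = wordProd va * (sigmaT i * (wordProd vb * (wordProd ub)⁻¹)) * wordProd ub := by
          rw [step2]
      _ = wordProd va * sigmaT i * wordProd vb := by group

/-! ### Section H2 : the toggle function -/

lemma Qp_iff_count {j : ℕ} {u : List ℕ} (h : u.count j ≤ 1) : Qp j (wordProd u) ↔ j ∉ u := by
  by_cases hj : j ∈ u
  · obtain ⟨c, c', rfl⟩ := List.append_of_mem hj
    have hcc : (c ++ j :: c').count j = c.count j + (c'.count j + 1) := by
      simp [List.count_append, List.count_cons]
    rw [hcc] at h
    have hc0 : j ∉ c := List.count_eq_zero.mp (by omega)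
    have hc0' : j ∉ c' := List.count_eq_zero.mp (by omega)
    have hprod : wordProd (c ++ j :: c') = wordProd c * sigmaT j * wordProd c' := by
      rw [wordProd_append, wordProd_cons, mul_assoc]
    rw [hprod]
    simp only [hj, not_true_eq_false, iff_false]
    exact notQp (Qp_wordProd hc0) (Qp_wordProd hc0')
  · simp only [hj, not_false_eq_true, iff_true]
    exact Qp_wordProd hj

open scoped Classical in
noncomputable def toggleFun (a b : List ℕ) (i : ℕ) (v : Equiv.Perm ℕ) : Equiv.Perm ℕ :=
  if h : ∃ p : List ℕ × List ℕ, p.1.Sublist a ∧ p.2.Sublist b ∧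
      v = wordProd p.1 * sigmaT i * wordProd p.2 then
    wordProd h.choose.1 * wordProd h.choose.2
  else if h' : ∃ p : List ℕ × List ℕ, p.1.Sublist a ∧ p.2.Sublist b ∧
      v = wordProd p.1 * wordProd p.2 then
    wordProd h'.choose.1 * sigmaT i * wordProd h'.choose.2
  else v

lemma toggleFun_spec1 {i : ℕ} (hi : 1 ≤ i) {a b : List ℕ} (hia : i ∉ a) (hib : i ∉ b)
    (hc1 : ¬(i + 1 ∈ a ∧ i + 1 ∈ b)) (hc2 : ¬(i - 1 ∈ a ∧ i - 1 ∈ b))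
    {ua ub : List ℕ} (hua : ua.Sublist a) (hub : ub.Sublist b) :
    toggleFun a b i (wordProd ua * sigmaT i * wordProd ub) = wordProd ua * wordProd ub := by
  have hex : ∃ p : List ℕ × List ℕ, p.1.Sublist a ∧ p.2.Sublist b ∧
      wordProd ua * sigmaT i * wordProd ub = wordProd p.1 * sigmaT i * wordProd p.2 :=
    ⟨(ua, ub), hua, hub, rfl⟩
  rw [toggleFun, dif_pos hex]
  obtain ⟨hs1, hs2, heq⟩ := hex.choose_spec
  exact ((toggle_iff hi hua hub hs1 hs2 hia hib hc1 hc2).mp heq).symm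

lemma toggleFun_spec2 {i : ℕ} (hi : 1 ≤ i) {a b : List ℕ} (hia : i ∉ a) (hib : i ∉ b)
    (hc1 : ¬(i + 1 ∈ a ∧ i + 1 ∈ b)) (hc2 : ¬(i - 1 ∈ a ∧ i - 1 ∈ b))
    {ua ub : List ℕ} (hua : ua.Sublist a) (hub : ub.Sublist b) :
    toggleFun a b i (wordProd ua * wordProd ub) = wordProd ua * sigmaT i * wordProd ub := by
  have hiua : i ∉ ua := fun h => hia (hua.subset h)
  have hiub : i ∉ ub := fun h => hib (hub.subset h)
  have hnex : ¬ ∃ p : List ℕ × List ℕ, p.1.Sublist a ∧ p.2.Sublist b ∧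
      wordProd ua * wordProd ub = wordProd p.1 * sigmaT i * wordProd p.2 := by
    rintro ⟨p, hp1, hp2, hpe⟩
    have hQ : Qp i (wordProd ua * wordProd ub) :=
      Qp_mul (Qp_wordProd hiua) (Qp_wordProd hiub)
    rw [hpe] at hQ
    exact notQp (Qp_wordProd (fun h => hia (hp1.subset h)))
      (Qp_wordProd (fun h => hib (hp2.subset h))) hQ
  have hex : ∃ p : List ℕ × List ℕ, p.1.Sublist a ∧ p.2.Sublist b ∧
      wordProd ua * wordProd ub = wordProd p.1 * wordProd p.2 :=
    ⟨(ua, ub), hua, hub, rfl⟩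
  rw [toggleFun, dif_neg hnex, dif_pos hex]
  obtain ⟨hs1, hs2, heq⟩ := hex.choose_spec
  exact ((toggle_iff hi hua hub hs1 hs2 hia hib hc1 hc2).mpr heq).symm

/-! ### Section H3 : the fiber bijection -/

lemma toggle_step {t₀ a b : List ℕ} {i : ℕ} (hi1 : 1 ≤ i)
    (hsplit : t₀ = a ++ i :: b) (hia : i ∉ a) (hib : i ∉ b)
    (hc1 : ¬(i + 1 ∈ a ∧ i + 1 ∈ b)) (hc2 : ¬(i - 1 ∈ a ∧ i - 1 ∈ b))
    {Bf : Finset (Equiv.Perm ℕ)} (hmemBf : ∀ v, v ∈ Bf ↔ SubP t₀ v)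
    {Sf : Finset ℕ} (hiSf : i ∈ Sf) (hScount : ∀ j ∈ Sf, t₀.count j = 1)
    (χ : Equiv.Perm ℕ → Finset ℕ)
    (hχmem : ∀ v j, j ∈ χ v ↔ j ∈ Sf ∧ ¬ Qp j v)
    {A : Finset ℕ} (hiA : i ∈ A) (hASf : A ⊆ Sf) :
    (Bf.filter fun v => χ v = A).card = (Bf.filter fun v => χ v = A.erase i).card := by
  have hdec : ∀ v, v ∈ Bf → ∃ ua ub : List ℕ, ua.Sublist a ∧ ub.Sublist b ∧
      (v = wordProd ua * sigmaT i * wordProd ub ∨ v = wordProd ua * wordProd ub) := by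
    intro v hv
    obtain ⟨u, hu, hp⟩ := (hmemBf v).mp hv
    rw [hsplit, show a ++ i :: b = a ++ ([i] ++ b) from by simp] at hu
    rw [List.sublist_append_iff] at hu
    obtain ⟨u1, u23, rfl, h1, h23⟩ := hu
    rw [List.sublist_append_iff] at h23
    obtain ⟨u2, u3, rfl, h2, h3⟩ := h23
    rcases sublist_singleton' h2 with rfl | rfl
    · exact ⟨u1, u3, h1, h3, Or.inr (by
        rw [← hp, List.nil_append, wordProd_append])⟩
    · refine ⟨u1, u3, h1, h3, Or.inl ?_⟩
      rw [← hp, wordProd_append, wordProd_append, wordProd_singleton, ← mul_assoc]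
  have hmemσ : ∀ {ua ub : List ℕ}, ua.Sublist a → ub.Sublist b →
      (wordProd ua * sigmaT i * wordProd ub) ∈ Bf := by
    intro ua ub hua hub
    rw [hmemBf]
    refine ⟨ua ++ i :: ub, ?_, ?_⟩
    · rw [hsplit]; exact hua.append (hub.cons₂ i)
    · rw [wordProd_append, wordProd_cons, ← mul_assoc]
  have hmempl : ∀ {ua ub : List ℕ}, ua.Sublist a → ub.Sublist b →
      (wordProd ua * wordProd ub) ∈ Bf := by
    intro ua ub hua hub
    rw [hmemBf]
    refine ⟨ua ++ ub, ?_, ?_⟩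
    · rw [hsplit]; exact hua.append (hub.cons i)
    · rw [wordProd_append]
  have hχσ : ∀ {ua ub : List ℕ}, ua.Sublist a → ub.Sublist b → ∀ j ∈ Sf,
      (¬ Qp j (wordProd ua * sigmaT i * wordProd ub) ↔ (j = i ∨ j ∈ ua ∨ j ∈ ub)) := by
    intro ua ub hua hub j hjSf
    have hjcnt : t₀.count j = 1 := hScount j hjSf
    have hword : wordProd (ua ++ i :: ub) = wordProd ua * sigmaT i * wordProd ub := by
      rw [wordProd_append, wordProd_cons, ← mul_assoc]
    have hsub : (ua ++ i :: ub).Sublist t₀ := by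
      rw [hsplit]; exact hua.append (hub.cons₂ i)
    have hcle : (ua ++ i :: ub).count j ≤ 1 :=
      le_trans (hsub.count_le j) (le_of_eq hjcnt)
    have h2 : ¬ Qp j (wordProd (ua ++ i :: ub)) ↔ j ∈ ua ++ i :: ub := by
      rw [Qp_iff_count hcle]; exact not_not
    rw [← hword, h2]
    simp only [List.mem_append, List.mem_cons]
    exact or_left_comm
  have hχpl : ∀ {ua ub : List ℕ}, ua.Sublist a → ub.Sublist b → ∀ j ∈ Sf,
      (¬ Qp j (wordProd ua * wordProd ub) ↔ (j ∈ ua ∨ j ∈ ub)) := by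
    intro ua ub hua hub j hjSf
    have hjcnt : t₀.count j = 1 := hScount j hjSf
    have hsub : (ua ++ ub).Sublist t₀ := by
      rw [hsplit]; exact hua.append (hub.cons i)
    have hcle : (ua ++ ub).count j ≤ 1 :=
      le_trans (hsub.count_le j) (le_of_eq hjcnt)
    have h2 : ¬ Qp j (wordProd (ua ++ ub)) ↔ j ∈ ua ++ ub := by
      rw [Qp_iff_count hcle]; exact not_not
    rw [← wordProd_append, h2, List.mem_append]
  apply Finset.card_bij' (fun v _ => toggleFun a b i v) (fun v _ => toggleFun a b i v)
  · -- forward membership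
    intro v hv
    obtain ⟨hvB, hvχ⟩ := Finset.mem_filter.mp hv
    have hiv : ¬ Qp i v := ((hχmem v i).mp (by rw [hvχ]; exact hiA)).2
    obtain ⟨ua, ub, hua, hub, hform | hform⟩ := hdec v hvB
    · subst hform
      rw [toggleFun_spec1 hi1 hia hib hc1 hc2 hua hub, Finset.mem_filter]
      refine ⟨hmempl hua hub, ?_⟩
      apply Finset.ext
      intro j
      rw [hχmem, Finset.mem_erase]
      by_cases hj : j ∈ Sf
      · rcases eq_or_ne j i with rfl | hji
        · have hQ : ¬¬ Qp j (wordProd ua * wordProd ub) := by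
            rw [hχpl hua hub j hj]
            push_neg
            exact ⟨fun h => hia (hua.subset h), fun h => hib (hub.subset h)⟩
          constructor
          · rintro ⟨-, h⟩
            exact absurd h hQ
          · rintro ⟨h, -⟩
            exact absurd rfl h
        · have e1 : ¬ Qp j (wordProd ua * wordProd ub) ↔ (j ∈ ua ∨ j ∈ ub) :=
            hχpl hua hub j hj
          have e2 : j ∈ A ↔ (j ∈ ua ∨ j ∈ ub) := by
            rw [← hvχ, hχmem, hχσ hua hub j hj]
            constructor
            · rintro ⟨-, h | h⟩
              · exact absurd h hji
              · exact h
            · intro h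
              exact ⟨hj, Or.inr h⟩
          constructor
          · rintro ⟨-, hq⟩
            exact ⟨hji, e2.mpr (e1.mp hq)⟩
          · rintro ⟨-, hA'⟩
            exact ⟨hj, e1.mpr (e2.mp hA')⟩
      · have hnA : j ∉ A := fun h => hj (hASf h)
        constructor
        · rintro ⟨h, -⟩
          exact absurd h hj
        · rintro ⟨-, h⟩
          exact absurd h hnA
    · exfalso
      subst hform
      exact hiv (Qp_mul (Qp_wordProd (fun h => hia (hua.subset h)))
        (Qp_wordProd (fun h => hib (hub.subset h))))
  · -- backward membership
    intro v hv
    obtain ⟨hvB, hvχ⟩ := Finset.mem_filter.mp hv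
    have hiv : Qp i v := by
      by_contra hQ
      have : i ∈ χ v := (hχmem v i).mpr ⟨hiSf, hQ⟩
      rw [hvχ] at this
      exact absurd this (Finset.notMem_erase i A)
    obtain ⟨ua, ub, hua, hub, hform | hform⟩ := hdec v hvB
    · exfalso
      subst hform
      exact (by rw [hχσ hua hub i hiSf]; left; rfl :
        ¬ Qp i (wordProd ua * sigmaT i * wordProd ub)) hiv
    · subst hform
      rw [toggleFun_spec2 hi1 hia hib hc1 hc2 hua hub, Finset.mem_filter]
      refine ⟨hmemσ hua hub, ?_⟩
      apply Finset.ext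
      intro j
      rw [hχmem]
      by_cases hj : j ∈ Sf
      · rcases eq_or_ne j i with rfl | hji
        · have hQ : ¬ Qp j (wordProd ua * sigmaT j * wordProd ub) := by
            rw [hχσ hua hub j hj]
            left; rfl
          constructor
          · intro _
            exact hiA
          · intro _
            exact ⟨hj, hQ⟩
        · have e1 : ¬ Qp j (wordProd ua * sigmaT i * wordProd ub) ↔ (j ∈ ua ∨ j ∈ ub) := by
            rw [hχσ hua hub j hj]
            constructor
            · rintro (h | h)
              · exact absurd h hji
              · exact h
            · intro h
              exact Or.inr h
          have e2 : j ∈ A.erase i ↔ (j ∈ ua ∨ j ∈ ub) := by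
            rw [← hvχ, hχmem, hχpl hua hub j hj]
            constructor
            · exact And.right
            · intro h
              exact ⟨hj, h⟩
          constructor
          · rintro ⟨-, hq⟩
            exact (Finset.mem_erase.mp (e2.mpr (e1.mp hq))).2
          · intro hA'
            exact ⟨hj, e1.mpr (e2.mp (Finset.mem_erase.mpr ⟨hji, hA'⟩))⟩
      · have hnA : j ∉ A := fun h => hj (hASf h)
        constructor
        · rintro ⟨h, -⟩
          exact absurd h hj
        · intro h
          exact absurd h hnA
  · -- left inverse
    intro v hv
    obtain ⟨hvB, hvχ⟩ := Finset.mem_filter.mp hv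
    have hiv : ¬ Qp i v := ((hχmem v i).mp (by rw [hvχ]; exact hiA)).2
    obtain ⟨ua, ub, hua, hub, hform | hform⟩ := hdec v hvB
    · subst hform
      rw [toggleFun_spec1 hi1 hia hib hc1 hc2 hua hub,
        toggleFun_spec2 hi1 hia hib hc1 hc2 hua hub]
    · exfalso
      subst hform
      exact hiv (Qp_mul (Qp_wordProd (fun h => hia (hua.subset h)))
        (Qp_wordProd (fun h => hib (hub.subset h))))
  · -- right inverse
    intro v hv
    obtain ⟨hvB, hvχ⟩ := Finset.mem_filter.mp hv
    have hiv : Qp i v := by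
      by_contra hQ
      have : i ∈ χ v := (hχmem v i).mpr ⟨hiSf, hQ⟩
      rw [hvχ] at this
      exact absurd this (Finset.notMem_erase i A)
    obtain ⟨ua, ub, hua, hub, hform | hform⟩ := hdec v hvB
    · exfalso
      subst hform
      exact (by rw [hχσ hua hub i hiSf]; left; rfl :
        ¬ Qp i (wordProd ua * sigmaT i * wordProd ub)) hiv
    · subst hform
      rw [toggleFun_spec2 hi1 hia hib hc1 hc2 hua hub,
        toggleFun_spec1 hi1 hia hib hc1 hc2 hua hub]

/-- 2^d divides |B(w)|, where d is the number of letters unconfined in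
every reduced word of w. -/
theorem two_pow_divides_ideal_card (n : ℕ) (w : Equiv.Perm ℕ) (hw : MemSymm n w) (d : ℕ)
    (hd : d = Set.ncard
      {i : ℕ | i ∈ supp n w ∧ ∀ s : List ℕ, IsReducedWord n w s → Unconfined i s}) :
    2 ^ d ∣ Set.ncard {v : Equiv.Perm ℕ | BruhatLE n v w} := by
  classical
  obtain ⟨t₀, ht₀⟩ := exists_reducedWord hw
  have hbound : ∀ j ∈ t₀, 1 ≤ j ∧ j ≤ n - 1 := ht₀.1.1
  have hcount : ∀ i ∈ {i : ℕ | i ∈ supp n w ∧ ∀ s : List ℕ, IsReducedWord n w s →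
      Unconfined i s}, t₀.count i = 1 := fun i hi => (hi.2 t₀ ht₀).1
  set Sf : Finset ℕ := t₀.toFinset.filter
    (fun i => i ∈ {i : ℕ | i ∈ supp n w ∧ ∀ s : List ℕ, IsReducedWord n w s →
      Unconfined i s}) with hSf
  have hSfS : ∀ i, i ∈ Sf ↔ i ∈ {i : ℕ | i ∈ supp n w ∧ ∀ s : List ℕ,
      IsReducedWord n w s → Unconfined i s} := by
    intro i
    rw [hSf, Finset.mem_filter, List.mem_toFinset]
    refine ⟨And.right, fun h => ⟨?_, h⟩⟩
    by_contra hmem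
    have := hcount i h
    rw [List.count_eq_zero_of_not_mem hmem] at this
    omega
  have hd' : d = Sf.card := by
    have hEq : {i : ℕ | i ∈ supp n w ∧ ∀ s : List ℕ, IsReducedWord n w s → Unconfined i s}
        = ↑Sf := Set.ext fun i => by rw [Finset.mem_coe, hSfS]
    rw [hd, hEq, Set.ncard_coe_finset]
  have hScount : ∀ j ∈ Sf, t₀.count j = 1 := fun j hj => hcount j ((hSfS j).mp hj)
  set Bf : Finset (Equiv.Perm ℕ) := (t₀.sublists.map wordProd).toFinset with hBf
  have hmemBf : ∀ v, v ∈ Bf ↔ SubP t₀ v := by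
    intro v
    rw [hBf, List.mem_toFinset, List.mem_map]
    constructor
    · rintro ⟨u, hu, rfl⟩
      exact ⟨u, List.mem_sublists.mp hu, rfl⟩
    · rintro ⟨u, hu, hp⟩
      exact ⟨u, List.mem_sublists.mpr hu, hp⟩
  have hSet : {v : Equiv.Perm ℕ | BruhatLE n v w} = ↑Bf := Set.ext fun v => by
    rw [Set.mem_setOf_eq, bruhatLE_iff_subP ht₀, Finset.mem_coe, hmemBf]
  rw [hSet, Set.ncard_coe_finset, hd']
  set χ : Equiv.Perm ℕ → Finset ℕ := fun v => Sf.filter (fun i => ¬ Qp i v) with hχ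
  have hχmem : ∀ v j, j ∈ χ v ↔ j ∈ Sf ∧ ¬ Qp j v := by
    intro v j
    rw [hχ]
    exact Finset.mem_filter
  have hmaps : ∀ v ∈ Bf, χ v ∈ Sf.powerset :=
    fun v _ => Finset.mem_powerset.mpr (fun j hj => ((hχmem v j).mp hj).1)
  rw [Finset.card_eq_sum_card_fiberwise hmaps]
  have toggle : ∀ i ∈ Sf, ∀ A : Finset ℕ, i ∈ A → A ⊆ Sf →
      (Bf.filter fun v => χ v = A).card = (Bf.filter fun v => χ v = A.erase i).card := by
    intro i hiSf A hiA hASf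
    have hiS := (hSfS i).mp hiSf
    have hcnt := hScount i hiSf
    have hit₀ : i ∈ t₀ := by
      by_contra h
      rw [List.count_eq_zero_of_not_mem h] at hcnt
      omega
    have hi1 : 1 ≤ i := (hbound i hit₀).1
    obtain ⟨a, b, hsplit⟩ := List.append_of_mem hit₀
    have hcnt' : a.count i + (b.count i + 1) = 1 := by
      rw [hsplit] at hcnt
      simpa [List.count_append, List.count_cons] using hcnt
    have hia : i ∉ a := List.count_eq_zero.mp (by omega)
    have hib : i ∉ b := List.count_eq_zero.mp (by omega)
    obtain ⟨hc1, hc2⟩ := (hiS.2 t₀ ht₀).2 a b hsplit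
    exact toggle_step hi1 hsplit hia hib hc1 hc2 hmemBf hiSf hScount χ hχmem hiA hASf
  have main : ∀ k (A : Finset ℕ), A.card = k → A ⊆ Sf →
      (Bf.filter fun v => χ v = A).card = (Bf.filter fun v => χ v = ∅).card := by
    intro k
    induction k using Nat.strong_induction_on with
    | _ k ih =>
      intro A hk hA
      rcases Finset.eq_empty_or_nonempty A with rfl | ⟨i, hiA⟩
      · rfl
      · have hcard : 1 ≤ A.card := Finset.card_pos.mpr ⟨i, hiA⟩
        rw [toggle i (hA hiA) A hiA hA]
        exact ih (k - 1) (by omega) (A.erase i)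
          (by rw [Finset.card_erase_of_mem hiA]; omega)
          ((Finset.erase_subset i A).trans hA)
  have hsum : ∑ A ∈ Sf.powerset, (Bf.filter fun v => χ v = A).card
      = 2 ^ Sf.card * (Bf.filter fun v => χ v = ∅).card := by
    rw [Finset.sum_congr rfl (fun A hA => main A.card A rfl (Finset.mem_powerset.mp hA)),
      Finset.sum_const, Finset.card_powerset, smul_eq_mul]
  rw [hsum]
  exact dvd_mul_right _ _
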